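/- arXiv:2301.06613 — 5 statements merged into one kernel-verified Lean document; each statement's English description precedes it below -/
import Mathlib

section
/- If a finite simple oriented graph Θ contains no simple cycle, then the Hecke–Kiselman monoid HK_Θ is finite; in particular its growth function f_Θ is bounded (the Gelfand–Kirillov dimension of its monoid algebra is 0). -/
open Relation

section Defs

variable {V : Type*}

/-- Simplicity of an oriented graph: no loops and at most one direction between two vertices. -/
def SimpleOriented (E : V → V → Prop) : Prop := ∀ x y, E x y → ¬ E y x

/-- A simple cycle: pairwise distinct vertices `x₁ → x₂ → ⋯ → x_N → x₁` with `N ≥ 3`. -/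
def IsSimpleCycle (E : V → V → Prop) (c : List V) : Prop :=
  3 ≤ c.length ∧ c.Nodup ∧ c.Chain' E ∧ ∀ h : c ≠ [], E (c.getLast h) (c.head h)

def IsCycleVertex (E : V → V → Prop) (x : V) : Prop := ∃ c, IsSimpleCycle E c ∧ x ∈ c

/-- Two distinct simple cycles connected by an oriented path of length ≥ 0. -/
def TwoCyclesConnected (E : V → V → Prop) : Prop :=
  ∃ c c' : List V, IsSimpleCycle E c ∧ IsSimpleCycle E c' ∧ ¬ c.IsRotated c' ∧
    ∃ a ∈ c, ∃ b ∈ c', Relation.ReflTransGen E a b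

/-- Defining relations of the Hecke–Kiselman monoid. -/
def hkRel (E : V → V → Prop) : FreeMonoid V → FreeMonoid V → Prop := fun a b =>
  (∃ x : V, a = .of x * .of x ∧ b = .of x) ∨
  (∃ x y : V, x ≠ y ∧ ¬ E x y ∧ ¬ E y x ∧ a = .of x * .of y ∧ b = .of y * .of x) ∨
  (∃ x y : V, E x y ∧ a = .of x * .of y * .of x ∧ b = .of x * .of y) ∨
  (∃ x y : V, E x y ∧ a = .of y * .of x * .of y ∧ b = .of x * .of y)

/-- The Hecke–Kiselman monoid of the graph. -/
def HKmonoid (E : V → V → Prop) : Type _ := (conGen (hkRel E)).Quotient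

instance (E : V → V → Prop) : Monoid (HKmonoid E) :=
  inferInstanceAs (Monoid (conGen (hkRel E)).Quotient)

/-- Canonical projection from the free monoid. -/
def hkProj (E : V → V → Prop) : FreeMonoid V →* HKmonoid E := (conGen (hkRel E)).mk'

/-- Image in `HKmonoid E` of a word over `V`. -/
def hkWord (E : V → V → Prop) (w : List V) : HKmonoid E := hkProj E (FreeMonoid.ofList w)

/-- Growth function: number of elements represented by words of length at most `n`. -/
noncomputable def hkGrowth (E : V → V → Prop) (n : ℕ) : ℕ :=
  (hkWord E '' {w : List V | w.length ≤ n}).ncard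

/-- `w ↛ t` -/
def NArrowTo (E : V → V → Prop) (w : List V) (t : V) : Prop :=
  t ∉ w ∧ ∀ x ∈ w, ¬ E x t

/-- `t ↛ w` -/
def NArrowFrom (E : V → V → Prop) (t : V) (w : List V) : Prop :=
  t ∉ w ∧ ∀ y ∈ w, ¬ E t y

/-- `t ↮ w` -/
def NConn (E : V → V → Prop) (t : V) (w : List V) : Prop :=
  NArrowTo E w t ∧ NArrowFrom E t w

/-- A word is reduced if it contains no factor of the forms (i), (ii), (iii). -/
def Reduced (E : V → V → Prop) (lt : V → V → Prop) (w : List V) : Prop :=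
  (¬ ∃ (p u q : List V) (t : V), w = p ++ [t] ++ u ++ [t] ++ q ∧ NArrowTo E u t) ∧
  (¬ ∃ (p u q : List V) (t : V), w = p ++ [t] ++ u ++ [t] ++ q ∧ NArrowFrom E t u) ∧
  (¬ ∃ (p u q : List V) (t₁ t₂ : V), w = p ++ [t₁] ++ u ++ [t₂] ++ q ∧ lt t₂ t₁ ∧
      NConn E t₂ ([t₁] ++ u))

/-- `m`-th power of a word. -/
def wpow (w : List V) (m : ℕ) : List V := (List.replicate m w).flatten

open Classical in
/-- The number `k_x` of paths ending at (resp. beginning at) `x`. -/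
noncomputable def kx (E : V → V → Prop) (x : V) : ℕ :=
  if ∃ a, IsCycleVertex E a ∧ Relation.ReflTransGen E x a then
    {p : List V | p ≠ [] ∧ p.Chain' E ∧ p.getLast? = some x}.ncard
  else
    {p : List V | p ≠ [] ∧ p.Chain' E ∧ p.head? = some x}.ncard

open Classical in
/-- The invariant `s(Θ) = Σ_j (Σ_{x ∈ 𝒜_j} k_x + 1)` with respect to an enumeration of
the simple cycles; `𝒜_j` is the set of (non-cycle) vertices connected by an edge with `C_j`. -/
noncomputable def sTheta [Fintype V] (E : V → V → Prop) {k : ℕ} (cycles : Fin k → List V) : ℕ :=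
  ∑ j : Fin k,
    ((∑ x ∈ Finset.univ.filter
        (fun x => ¬ IsCycleVertex E x ∧ ∃ a ∈ cycles j, E x a ∨ E a x), kx E x) + 1)

end Defs

section ProofAux

open List

variable {V : Type*} {E : V → V → Prop}

/-- From a closed walk, extract a simple cycle. -/
lemma cycle_of_walk (hsimple : SimpleOriented E) :
    ∀ (n : ℕ) (W : List V), W.length ≤ n → ∀ (hW : W ≠ []), W.Chain' E →
      E (W.getLast hW) (W.head hW) → ∃ c, IsSimpleCycle E c := by
  classical
  intro n
  induction n with
  | zero =>
    intro W hlen hW _ _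
    cases W with
    | nil => exact absurd rfl hW
    | cons a l => simp at hlen
  | succ n ih =>
    intro W hlen hW hchain hwrap
    by_cases hnd : W.Nodup
    · rcases lt_or_ge W.length 3 with h3 | h3
      · -- length 1 or 2 : contradicts simplicity
        interval_cases h : W.length
        · simp_all
        · obtain ⟨a, rfl⟩ := List.length_eq_one_iff.mp h
          exact absurd hwrap (hsimple a a (by simpa using hwrap))
        · obtain ⟨a, b, rfl⟩ := List.length_eq_two.mp h
          have hab : E a b := by simpa [List.Chain'] using hchain
          have hba : E b a := by simpa using hwrap
          exact absurd hba (hsimple a b hab)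
      · exact ⟨W, h3, hnd, hchain, fun _ => hwrap⟩
    · -- a duplicate gives a shorter closed walk
      obtain ⟨x, hx⟩ := List.exists_duplicate_iff_not_nodup.mpr hnd
      have hcnt : 2 ≤ W.count x := List.duplicate_iff_two_le_count.mp hx
      have hmem : x ∈ W := List.count_pos_iff.mp (by omega)
      obtain ⟨p, t, rfl⟩ := List.append_of_mem hmem
      have hcnt2 : 0 < p.count x + t.count x := by
        simp [List.count_append] at hcnt; omega
      have hsplit : ∃ p' u q', p ++ x :: t = p' ++ [x] ++ u ++ [x] ++ q' := by
        rcases Nat.lt_or_ge 0 (t.count x) with ht | ht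
        · obtain ⟨q1, q2, rfl⟩ := List.append_of_mem (List.count_pos_iff.mp ht)
          exact ⟨p, q1, q2, by simp⟩
        · have hp : x ∈ p := List.count_pos_iff.mp (by omega)
          obtain ⟨p1, p2, rfl⟩ := List.append_of_mem hp
          exact ⟨p1, p2, t, by simp⟩
      obtain ⟨p', u, q', heq⟩ := hsplit
      have hinf : (([x] ++ u) ++ [x]) <:+: (p ++ x :: t) :=
        ⟨p', q', by rw [heq]; simp⟩
      have hch2 : List.Chain' E (([x] ++ u) ++ [x]) := hchain.infix hinf
      have hch1 : List.Chain' E ([x] ++ u) := (List.isChain_append.mp hch2).1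
      have hWne : ([x] ++ u : List V) ≠ [] := by simp
      have hlast : E (([x] ++ u).getLast hWne) x := by
        have := (List.isChain_append.mp hch2).2.2
        refine this _ ?_ x rfl
        rw [Option.mem_def]
        exact List.getLast?_eq_getLast hWne
      have hhead : ([x] ++ u).head hWne = x := rfl
      refine ih ([x] ++ u) ?_ hWne hch1 (by rw [hhead]; exact hlast)
      have : (p ++ x :: t).length = p'.length + 1 + u.length + 1 + q'.length := by
        rw [heq]; simp; omega
      simp only [List.length_append, List.length_cons] at hlen ⊢
      simp at this ⊢
      omega

lemma transGen_irrefl (hsimple : SimpleOriented E)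
    (hnocycle : ¬ ∃ c, IsSimpleCycle E c) (x : V) :
    ¬ Relation.TransGen E x x := by
  intro hx
  obtain ⟨y, hxy, hyx⟩ := Relation.TransGen.head'_iff.mp hx
  obtain ⟨l, hchain, hlast⟩ := List.exists_isChain_cons_of_relationReflTransGen hyx
  refine hnocycle (cycle_of_walk hsimple (y :: l).length (y :: l) le_rfl
    (List.cons_ne_nil _ _) hchain ?_)
  rw [hlast]
  exact hxy

lemma exists_source [Fintype V] (hsimple : SimpleOriented E)
    (hnocycle : ¬ ∃ c, IsSimpleCycle E c) (S : Finset V) (hS : S.Nonempty) :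
    ∃ s ∈ S, ∀ a ∈ S, ¬ E a s := by
  classical
  by_contra h
  push_neg at h
  choose f hf1 hf2 using h
  obtain ⟨x₀, hx₀⟩ := hS
  let F : {x // x ∈ S} → {x // x ∈ S} := fun x => ⟨f x.1 x.2, hf1 x.1 x.2⟩
  have hF : ∀ x : {x // x ∈ S}, E (F x).1 x.1 := fun x => hf2 x.1 x.2
  let g : ℕ → {x // x ∈ S} := fun n => F^[n] ⟨x₀, hx₀⟩
  have key : ∀ i j, i < j → Relation.TransGen E (g j).1 (g i).1 := by
    intro i j hij
    induction j with
    | zero => omega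
    | succ j ihj =>
      have hstep : E (g (j + 1)).1 (g j).1 := by
        have : g (j + 1) = F (g j) := Function.iterate_succ_apply' F _ _
        rw [this]; exact hF (g j)
      rcases Nat.lt_or_ge i j with h' | h'
      · exact Relation.TransGen.head hstep (ihj h')
      · have : i = j := by omega
        subst this
        exact Relation.TransGen.single hstep
  obtain ⟨i, j, hne, heq⟩ := Finite.exists_ne_map_eq_of_infinite g
  rcases hne.lt_or_gt with h' | h'
  · exact transGen_irrefl hsimple hnocycle _ (heq ▸ key i j h')
  · exact transGen_irrefl hsimple hnocycle _ (heq ▸ key j i h')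

/-! ### Monoid side -/

/-- The image of a single letter. -/
noncomputable def letter (E : V → V → Prop) (x : V) : HKmonoid E := hkWord E [x]

/-- Product of the images of the letters of a word. -/
noncomputable def wp (E : V → V → Prop) (w : List V) : HKmonoid E :=
  (w.map (letter E)).prod

@[simp] lemma wp_nil : wp E ([] : List V) = 1 := rfl

@[simp] lemma wp_cons (x : V) (w : List V) :
    wp E (x :: w) = letter E x * wp E w := by simp [wp]

@[simp] lemma wp_append (u v : List V) : wp E (u ++ v) = wp E u * wp E v := by
  simp [wp]

lemma hkWord_eq_wp (w : List V) : hkWord E w = wp E w := by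
  induction w with
  | nil => exact map_one (hkProj E)
  | cons a w ih =>
    have : hkWord E (a :: w) = hkWord E [a] * hkWord E w := by
      simp only [hkWord]
      rw [show FreeMonoid.ofList (a :: w) = FreeMonoid.ofList [a] * FreeMonoid.ofList w from rfl,
        map_mul]
    rw [this, ih, wp_cons]; rfl

lemma rel_eq {a b : FreeMonoid V} (h : hkRel E a b) : hkProj E a = hkProj E b :=
  (Con.eq _).mpr (ConGen.Rel.of a b h)

lemma letter_idem (x : V) : letter E x * letter E x = letter E x := by
  have h : hkProj E (.of x * .of x) = hkProj E (.of x) :=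
    rel_eq (Or.inl ⟨x, rfl, rfl⟩)
  simpa [letter, hkWord, map_mul] using h

lemma letter_comm {x y : V} (hxy : x ≠ y) (h1 : ¬ E x y) (h2 : ¬ E y x) :
    letter E x * letter E y = letter E y * letter E x := by
  have h : hkProj E (.of x * .of y) = hkProj E (.of y * .of x) :=
    rel_eq (Or.inr (Or.inl ⟨x, y, hxy, h1, h2, rfl, rfl⟩))
  simpa [letter, hkWord, map_mul] using h

lemma letter_abs {x y : V} (h : E x y) :
    letter E x * letter E y * letter E x = letter E x * letter E y := by
  have h' : hkProj E (.of x * .of y * .of x) = hkProj E (.of x * .of y) :=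
    rel_eq (Or.inr (Or.inr (Or.inl ⟨x, y, h, rfl, rfl⟩)))
  simpa [letter, hkWord, map_mul] using h'

lemma letter_idem_t (x : V) (t : HKmonoid E) :
    letter E x * (letter E x * t) = letter E x * t := by
  rw [← mul_assoc, letter_idem]

lemma letter_comm_t {x y : V} (hxy : x ≠ y) (h1 : ¬ E x y) (h2 : ¬ E y x)
    (t : HKmonoid E) :
    letter E x * (letter E y * t) = letter E y * (letter E x * t) := by
  rw [← mul_assoc, letter_comm hxy h1 h2, mul_assoc]

lemma letter_abs_t {x y : V} (h : E x y) (t : HKmonoid E) :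
    letter E x * (letter E y * (letter E x * t)) = letter E x * (letter E y * t) := by
  simp only [← mul_assoc]
  rw [letter_abs h]

/-- The pumping lemma for a source vertex. -/
lemma pump {s : V} (hss : ¬ E s s) :
    ∀ (u : List V), (∀ a ∈ u, ¬ E a s) → ∀ t : HKmonoid E,
      letter E s * (wp E u * (letter E s * t)) = letter E s * (wp E u * t) := by
  intro u
  induction u with
  | nil => intro _ t; simp [letter_idem_t]
  | cons a u ih =>
    intro hu t
    have hu' : ∀ b ∈ u, ¬ E b s := fun b hb => hu b (List.mem_cons_of_mem _ hb)
    have has : ¬ E a s := hu a List.mem_cons_self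
    simp only [wp_cons, mul_assoc]
    by_cases hsa : a = s
    · subst hsa
      rw [letter_idem_t, letter_idem_t]
      exact ih hu' t
    · by_cases hEsa : E s a
      · rw [← letter_abs_t hEsa (wp E u * (letter E s * t)), ih hu' t,
          letter_abs_t hEsa]
      · rw [letter_comm_t (Ne.symm hsa) hEsa has, ih hu' t,
          ← letter_comm_t (Ne.symm hsa) hEsa has]

lemma pump' {s : V} (hss : ¬ E s s) (p u q : List V) (hu : ∀ a ∈ u, ¬ E a s) :
    hkWord E (p ++ [s] ++ u ++ [s] ++ q) = hkWord E (p ++ [s] ++ u ++ q) := by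
  rw [hkWord_eq_wp, hkWord_eq_wp]
  simp only [wp_append, wp_cons, wp_nil, mul_one, mul_assoc]
  exact congrArg (wp E p * ·) (pump hss u hu (wp E q))

lemma exists_two_occ [DecidableEq V] {s : V} {w : List V} (h : 2 ≤ w.count s) :
    ∃ p u q, w = p ++ [s] ++ u ++ [s] ++ q := by
  have hmem : s ∈ w := List.count_pos_iff.mp (by omega)
  obtain ⟨p, t, rfl⟩ := List.append_of_mem hmem
  have hcnt : 2 ≤ p.count s + (t.count s + 1) := by
    simpa [List.count_append] using h
  rcases Nat.lt_or_ge 0 (t.count s) with ht | ht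
  · obtain ⟨q1, q2, rfl⟩ := List.append_of_mem (List.count_pos_iff.mp ht)
    exact ⟨p, q1, q2, by simp⟩
  · have hp : s ∈ p := List.count_pos_iff.mp (by omega)
    obtain ⟨p1, p2, rfl⟩ := List.append_of_mem hp
    exact ⟨p1, p2, t, by simp⟩

lemma reduce_count [DecidableEq V] {s : V} (hss : ¬ E s s) :
    ∀ (n : ℕ) (w : List V), w.count s ≤ n → (∀ a ∈ w, ¬ E a s) →
      ∃ w', hkWord E w = hkWord E w' ∧ w'.count s ≤ 1 ∧ ∀ x ∈ w', x ∈ w := by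
  intro n
  induction n with
  | zero => intro w h _; exact ⟨w, rfl, by omega, fun x hx => hx⟩
  | succ n ih =>
    intro w hcount hw
    by_cases h1 : w.count s ≤ 1
    · exact ⟨w, rfl, h1, fun x hx => hx⟩
    · have h2 : 2 ≤ w.count s := by omega
      obtain ⟨p, u, q, rfl⟩ := exists_two_occ h2
      have hu : ∀ a ∈ u, ¬ E a s := fun a ha => hw a (by simp [ha])
      have heq := pump' hss p u q hu
      have e1 : (p ++ [s] ++ u ++ [s] ++ q).count s
          = p.count s + u.count s + q.count s + 2 := by
        simp [List.count_append]; omega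
      have e2 : (p ++ [s] ++ u ++ q).count s
          = p.count s + u.count s + q.count s + 1 := by
        simp [List.count_append]; omega
      have hc' : (p ++ [s] ++ u ++ q).count s ≤ n := by omega
      obtain ⟨w', h1', h2', h3'⟩ := ih (p ++ [s] ++ u ++ q) hc'
        (fun a ha => hw a (by simp at ha ⊢; tauto))
      exact ⟨w', heq.trans h1', h2', fun x hx => by
        have := h3' x hx; simp at this ⊢; tauto⟩

lemma main_reduce [Fintype V] (hsimple : SimpleOriented E)
    (hnocycle : ¬ ∃ c, IsSimpleCycle E c) :
    ∀ (n : ℕ) (S : Finset V) (w : List V), S.card ≤ n → (∀ x ∈ w, x ∈ S) →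
      ∃ w', hkWord E w = hkWord E w' ∧ w'.length ≤ 2 ^ S.card - 1 ∧ ∀ x ∈ w', x ∈ S := by
  classical
  intro n
  induction n with
  | zero =>
    intro S w hcard hw
    cases w with
    | nil => exact ⟨[], rfl, by simp, by simp⟩
    | cons a w =>
      have hS : S = ∅ := Finset.card_eq_zero.mp (by omega)
      exact absurd (hw a (by simp)) (by simp [hS])
  | succ n ih =>
    intro S w hcard hw
    cases w with
    | nil => exact ⟨[], rfl, by simp, by simp⟩
    | cons a₀ w₀ =>
      set w := a₀ :: w₀ with hwdef
      have hS : S.Nonempty := ⟨a₀, hw a₀ (by simp [hwdef])⟩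
      obtain ⟨s, hsS, hs⟩ := exists_source hsimple hnocycle S hS
      have hss : ¬ E s s := fun h => hsimple s s h h
      obtain ⟨w₁, heq1, hcnt1, hmem1⟩ :=
        reduce_count hss (w.count s) w le_rfl (fun a ha => hs a (hw a ha))
      have hw₁S : ∀ x ∈ w₁, x ∈ S := fun x hx => hw x (hmem1 x hx)
      have hcard' : (S.erase s).card ≤ n := by
        rw [Finset.card_erase_of_mem hsS]
        have := Finset.card_pos.mpr hS
        omega
      have hScard : 1 ≤ S.card := Finset.card_pos.mpr hS
      have hpow : 2 ^ (S.card - 1) + 2 ^ (S.card - 1) = 2 ^ S.card := by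
        obtain ⟨m, hm⟩ : ∃ m, S.card = m + 1 := ⟨S.card - 1, by omega⟩
        rw [hm]
        simp [pow_succ, mul_two]
      have hpos : 1 ≤ 2 ^ (S.card - 1) := Nat.one_le_two_pow
      have hcerase : (S.erase s).card = S.card - 1 := Finset.card_erase_of_mem hsS
      by_cases hsw : s ∈ w₁
      · obtain ⟨p, q, hw₁⟩ := List.append_of_mem hsw
        have hcnts : p.count s = 0 ∧ q.count s = 0 := by
          rw [hw₁] at hcnt1
          simp [List.count_append] at hcnt1
          omega
        have hpS : ∀ x ∈ p, x ∈ S.erase s := by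
          intro x hx
          refine Finset.mem_erase.mpr ⟨?_, hw₁S x (by simp [hw₁, hx])⟩
          intro h
          exact absurd (List.count_pos_iff.mpr (h ▸ hx)) (by omega)
        have hqS : ∀ x ∈ q, x ∈ S.erase s := by
          intro x hx
          refine Finset.mem_erase.mpr ⟨?_, hw₁S x (by simp [hw₁, hx])⟩
          intro h
          exact absurd (List.count_pos_iff.mpr (h ▸ hx)) (by omega)
        obtain ⟨p', hp1, hp2, hp3⟩ := ih (S.erase s) p hcard' hpS
        obtain ⟨q', hq1, hq2, hq3⟩ := ih (S.erase s) q hcard' hqS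
        refine ⟨p' ++ [s] ++ q', ?_, ?_, ?_⟩
        · rw [heq1, hw₁]
          rw [show p ++ s :: q = p ++ [s] ++ q by simp]
          rw [hkWord_eq_wp, hkWord_eq_wp]
          simp only [wp_append]
          rw [← hkWord_eq_wp p, ← hkWord_eq_wp q, ← hkWord_eq_wp p', ← hkWord_eq_wp q',
            hp1, hq1]
        · simp only [List.length_append, List.length_cons, List.length_nil]
          rw [hcerase] at hp2 hq2
          omega
        · intro x hx
          rcases List.mem_append.mp hx with hx | hx
          · rcases List.mem_append.mp hx with hx | hx
            · exact Finset.mem_of_mem_erase (hp3 x hx)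
            · rw [List.mem_singleton.mp hx]; exact hsS
          · exact Finset.mem_of_mem_erase (hq3 x hx)
      · have hw₁S' : ∀ x ∈ w₁, x ∈ S.erase s := fun x hx =>
          Finset.mem_erase.mpr ⟨fun h => hsw (h ▸ hx), hw₁S x hx⟩
        obtain ⟨w', h1, h2, h3⟩ := ih (S.erase s) w₁ hcard' hw₁S'
        refine ⟨w', heq1.trans h1, ?_, fun x hx => Finset.mem_of_mem_erase (h3 x hx)⟩
        rw [hcerase] at h2
        omega

end ProofAux


/-- If a finite simple oriented graph contains no simple cycle, then the
Hecke–Kiselman monoid `HK_Θ` is finite; in particular its growth function is bounded. -/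
theorem hk_finite_of_no_cycle
    {V : Type*} [Fintype V] (E : V → V → Prop)
    (hsimple : SimpleOriented E)
    (hnocycle : ¬ ∃ c, IsSimpleCycle E c) :
    Finite (HKmonoid E) ∧ ∃ B : ℕ, ∀ n : ℕ, hkGrowth E n ≤ B := by
  classical
  set N := 2 ^ (Finset.univ : Finset V).card - 1 with hN
  have hsurj : Function.Surjective (hkProj E) := Con.mk'_surjective
  have key : ∀ x : HKmonoid E, ∃ w : List V, w.length ≤ N ∧ hkWord E w = x := by
    intro x
    obtain ⟨a, rfl⟩ := hsurj x
    obtain ⟨w', h1, h2, _⟩ := main_reduce hsimple hnocycle (Finset.univ : Finset V).card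
      Finset.univ (FreeMonoid.toList a) le_rfl (fun y _ => Finset.mem_univ y)
    refine ⟨w', h2, ?_⟩
    rw [← h1]
    show hkProj E (FreeMonoid.ofList (FreeMonoid.toList a)) = hkProj E a
    rw [FreeMonoid.ofList_toList]
  have hsub : (Set.univ : Set (HKmonoid E)) ⊆ hkWord E '' {w : List V | w.length ≤ N} := by
    intro x _
    obtain ⟨w, hw, hwx⟩ := key x
    exact ⟨w, hw, hwx⟩
  have hfin : (Set.univ : Set (HKmonoid E)).Finite :=
    ((List.finite_length_le V N).image _).subset hsub
  refine ⟨Set.finite_univ_iff.mp hfin, (Set.univ : Set (HKmonoid E)).ncard, fun n => ?_⟩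
  exact Set.ncard_le_ncard (Set.subset_univ _) hfin
end

section
/- Let Θ be a finite simple oriented graph and fix any linear order on its vertex set V. Then the set of reduced words is a regular language over the alphabet V: there exists a deterministic finite automaton over V (with finitely many states) whose accepted language is exactly the set of reduced words. -/
open Relation

section Aux

variable {V : Type*} (E : V → V → Prop) (lt : V → V → Prop)

private def HasI (w : List V) : Prop :=
  ∃ (p u q : List V) (t : V), w = p ++ [t] ++ u ++ [t] ++ q ∧ NArrowTo E u t
private def HasII (w : List V) : Prop :=
  ∃ (p u q : List V) (t : V), w = p ++ [t] ++ u ++ [t] ++ q ∧ NArrowFrom E t u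
private def HasIII (w : List V) : Prop :=
  ∃ (p u q : List V) (t₁ t₂ : V), w = p ++ [t₁] ++ u ++ [t₂] ++ q ∧ lt t₂ t₁ ∧
    NConn E t₂ ([t₁] ++ u)

private lemma reduced_iff (w : List V) :
    Reduced E lt w ↔ ¬ HasI E w ∧ ¬ HasII E w ∧ ¬ HasIII E lt w := Iff.rfl

private def PIp (w : List V) (a : V) : Prop :=
  ∃ p u, w = p ++ [a] ++ u ∧ NArrowTo E u a
private def PIIp (w : List V) (a : V) : Prop :=
  ∃ p u, w = p ++ [a] ++ u ∧ NArrowFrom E a u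
private def PIIIp (w : List V) (a : V) : Prop :=
  ∃ p u t₁, w = p ++ [t₁] ++ u ∧ lt a t₁ ∧ NConn E a ([t₁] ++ u)

private lemma snoc_inj {w p : List V} {b c : V} (h : w ++ [b] = p ++ [c]) :
    w = p ∧ b = c := by
  obtain ⟨h1, h2⟩ := List.append_inj' h rfl
  exact ⟨h1, by simpa using h2⟩

private lemma narrowTo_snoc {u : List V} {a b : V} :
    NArrowTo E (u ++ [b]) a ↔ NArrowTo E u a ∧ a ≠ b ∧ ¬ E b a := by
  simp only [NArrowTo, List.mem_append, List.mem_singleton]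
  constructor
  · rintro ⟨h1, h2⟩
    exact ⟨⟨fun h => h1 (Or.inl h), fun x hx => h2 x (Or.inl hx)⟩,
      fun h => h1 (Or.inr h), h2 b (Or.inr rfl)⟩
  · rintro ⟨⟨h1, h2⟩, h3, h4⟩
    refine ⟨?_, ?_⟩
    · rintro (h | h); exacts [h1 h, h3 h]
    · rintro x (hx | rfl); exacts [h2 x hx, h4]

private lemma narrowFrom_snoc {u : List V} {a b : V} :
    NArrowFrom E a (u ++ [b]) ↔ NArrowFrom E a u ∧ a ≠ b ∧ ¬ E a b := by
  simp only [NArrowFrom, List.mem_append, List.mem_singleton]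
  constructor
  · rintro ⟨h1, h2⟩
    exact ⟨⟨fun h => h1 (Or.inl h), fun x hx => h2 x (Or.inl hx)⟩,
      fun h => h1 (Or.inr h), h2 b (Or.inr rfl)⟩
  · rintro ⟨⟨h1, h2⟩, h3, h4⟩
    refine ⟨?_, ?_⟩
    · rintro (h | h); exacts [h1 h, h3 h]
    · rintro x (hx | rfl); exacts [h2 x hx, h4]

private lemma nconn_snoc {u : List V} {a b : V} :
    NConn E a (u ++ [b]) ↔ NConn E a u ∧ a ≠ b ∧ ¬ E b a ∧ ¬ E a b := by
  rw [NConn, NConn, narrowTo_snoc, narrowFrom_snoc]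
  tauto

private lemma narrowTo_nil {a : V} : NArrowTo E [] a := by
  refine ⟨by simp, by simp⟩

private lemma narrowFrom_nil {a : V} : NArrowFrom E a [] := by
  refine ⟨by simp, by simp⟩

private lemma PIp_snoc {w : List V} {a b : V} :
    PIp E (w ++ [b]) a ↔ a = b ∨ (¬ E b a ∧ PIp E w a) := by
  constructor
  · rintro ⟨p, u, h, hn⟩
    rcases u.eq_nil_or_concat with rfl | ⟨u', c, rfl⟩
    · simp only [List.append_nil] at h
      obtain ⟨-, rfl⟩ := snoc_inj (by simpa using h)
      exact Or.inl rfl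
    · simp only [List.concat_eq_append] at h hn
      rw [show p ++ [a] ++ (u' ++ [c]) = (p ++ [a] ++ u') ++ [c] by simp] at h
      obtain ⟨hw, rfl⟩ := snoc_inj h
      rw [narrowTo_snoc] at hn
      exact Or.inr ⟨hn.2.2, p, u', hw, hn.1⟩
  · rintro (rfl | ⟨hE, p, u, rfl, hn⟩)
    · exact ⟨w, [], by simp, narrowTo_nil E⟩
    · by_cases hab : a = b
      · exact ⟨p ++ [a] ++ u, [], by simp [hab], narrowTo_nil E⟩
      · refine ⟨p, u ++ [b], by simp, ?_⟩
        rw [narrowTo_snoc]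
        exact ⟨hn, hab, hE⟩

private lemma PIIp_snoc {w : List V} {a b : V} :
    PIIp E (w ++ [b]) a ↔ a = b ∨ (¬ E a b ∧ PIIp E w a) := by
  constructor
  · rintro ⟨p, u, h, hn⟩
    rcases u.eq_nil_or_concat with rfl | ⟨u', c, rfl⟩
    · simp only [List.append_nil] at h
      obtain ⟨-, rfl⟩ := snoc_inj (by simpa using h)
      exact Or.inl rfl
    · simp only [List.concat_eq_append] at h hn
      rw [show p ++ [a] ++ (u' ++ [c]) = (p ++ [a] ++ u') ++ [c] by simp] at h
      obtain ⟨hw, rfl⟩ := snoc_inj h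
      rw [narrowFrom_snoc] at hn
      exact Or.inr ⟨hn.2.2, p, u', hw, hn.1⟩
  · rintro (rfl | ⟨hE, p, u, rfl, hn⟩)
    · exact ⟨w, [], by simp, narrowFrom_nil E⟩
    · by_cases hab : a = b
      · exact ⟨p ++ [a] ++ u, [], by simp [hab], narrowFrom_nil E⟩
      · refine ⟨p, u ++ [b], by simp, ?_⟩
        rw [narrowFrom_snoc]
        exact ⟨hn, hab, hE⟩

private lemma PIIIp_snoc {w : List V} {a b : V} :
    PIIIp E lt (w ++ [b]) a ↔
      (a ≠ b ∧ ¬ E b a ∧ ¬ E a b) ∧ (lt a b ∨ PIIIp E lt w a) := by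
  constructor
  · rintro ⟨p, u, t₁, h, hlt, hn⟩
    rcases u.eq_nil_or_concat with rfl | ⟨u', c, rfl⟩
    · simp only [List.append_nil] at h
      obtain ⟨rfl, heq⟩ := snoc_inj h
      subst heq
      have := nconn_snoc E (u := ([] : List V)) (a := a) (b := b) |>.mp (by simpa using hn)
      exact ⟨⟨this.2.1, this.2.2.1, this.2.2.2⟩, Or.inl hlt⟩
    · simp only [List.concat_eq_append] at h hn
      rw [show p ++ [t₁] ++ (u' ++ [c]) = (p ++ [t₁] ++ u') ++ [c] by simp] at h
      obtain ⟨hw, rfl⟩ := snoc_inj h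
      rw [show [t₁] ++ (u' ++ [b]) = ([t₁] ++ u') ++ [b] by simp, nconn_snoc] at hn
      exact ⟨⟨hn.2.1, hn.2.2.1, hn.2.2.2⟩, Or.inr ⟨p, u', t₁, hw, hlt, hn.1⟩⟩
  · rintro ⟨⟨hne, hba, hab⟩, hlt | ⟨p, u, t₁, rfl, hlt, hn⟩⟩
    · refine ⟨w, [], b, by simp, hlt, ?_⟩
      have : NConn E a ([] ++ [b]) := by
        rw [nconn_snoc]
        exact ⟨⟨narrowTo_nil E, narrowFrom_nil E⟩, hne, hba, hab⟩
      simpa using this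
    · refine ⟨p, u ++ [b], t₁, by simp, hlt, ?_⟩
      rw [show [t₁] ++ (u ++ [b]) = ([t₁] ++ u) ++ [b] by simp, nconn_snoc]
      exact ⟨hn, hne, hba, hab⟩

private lemma hasI_snoc {w : List V} {b : V} :
    HasI E (w ++ [b]) ↔ HasI E w ∨ PIp E w b := by
  constructor
  · rintro ⟨p, u, q, t, h, hn⟩
    rcases q.eq_nil_or_concat with rfl | ⟨q', c, rfl⟩
    · simp only [List.append_nil] at h
      rw [show p ++ [t] ++ u ++ [t] = (p ++ [t] ++ u) ++ [t] by simp] at h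
      obtain ⟨hw, rfl⟩ := snoc_inj h
      exact Or.inr ⟨p, u, hw, hn⟩
    · simp only [List.concat_eq_append] at h
      rw [show p ++ [t] ++ u ++ [t] ++ (q' ++ [c]) = (p ++ [t] ++ u ++ [t] ++ q') ++ [c] by simp] at h
      obtain ⟨hw, rfl⟩ := snoc_inj h
      exact Or.inl ⟨p, u, q', t, hw, hn⟩
  · rintro (⟨p, u, q, t, rfl, hn⟩ | ⟨p, u, rfl, hn⟩)
    · exact ⟨p, u, q ++ [b], t, by simp, hn⟩
    · exact ⟨p, u, [], b, by simp, hn⟩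

private lemma hasII_snoc {w : List V} {b : V} :
    HasII E (w ++ [b]) ↔ HasII E w ∨ PIIp E w b := by
  constructor
  · rintro ⟨p, u, q, t, h, hn⟩
    rcases q.eq_nil_or_concat with rfl | ⟨q', c, rfl⟩
    · simp only [List.append_nil] at h
      rw [show p ++ [t] ++ u ++ [t] = (p ++ [t] ++ u) ++ [t] by simp] at h
      obtain ⟨hw, rfl⟩ := snoc_inj h
      exact Or.inr ⟨p, u, hw, hn⟩
    · simp only [List.concat_eq_append] at h
      rw [show p ++ [t] ++ u ++ [t] ++ (q' ++ [c]) = (p ++ [t] ++ u ++ [t] ++ q') ++ [c] by simp] at h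
      obtain ⟨hw, rfl⟩ := snoc_inj h
      exact Or.inl ⟨p, u, q', t, hw, hn⟩
  · rintro (⟨p, u, q, t, rfl, hn⟩ | ⟨p, u, rfl, hn⟩)
    · exact ⟨p, u, q ++ [b], t, by simp, hn⟩
    · exact ⟨p, u, [], b, by simp, hn⟩

private lemma hasIII_snoc {w : List V} {b : V} :
    HasIII E lt (w ++ [b]) ↔ HasIII E lt w ∨ PIIIp E lt w b := by
  constructor
  · rintro ⟨p, u, q, t₁, t₂, h, hlt, hn⟩
    rcases q.eq_nil_or_concat with rfl | ⟨q', c, rfl⟩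
    · simp only [List.append_nil] at h
      rw [show p ++ [t₁] ++ u ++ [t₂] = (p ++ [t₁] ++ u) ++ [t₂] by simp] at h
      obtain ⟨hw, rfl⟩ := snoc_inj h
      exact Or.inr ⟨p, u, t₁, hw, hlt, hn⟩
    · simp only [List.concat_eq_append] at h
      rw [show p ++ [t₁] ++ u ++ [t₂] ++ (q' ++ [c]) = (p ++ [t₁] ++ u ++ [t₂] ++ q') ++ [c] by simp] at h
      obtain ⟨hw, rfl⟩ := snoc_inj h
      exact Or.inl ⟨p, u, q', t₁, t₂, hw, hlt, hn⟩
  · rintro (⟨p, u, q, t₁, t₂, rfl, hlt, hn⟩ | ⟨p, u, t₁, rfl, hlt, hn⟩)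
    · exact ⟨p, u, q ++ [b], t₁, t₂, by simp, hlt, hn⟩
    · exact ⟨p, u, [], t₁, b, by simp, hlt, hn⟩

private lemma not_hasI_nil : ¬ HasI E ([] : List V) := by
  rintro ⟨p, u, q, t, h, -⟩; simp at h

private lemma not_hasII_nil : ¬ HasII E ([] : List V) := by
  rintro ⟨p, u, q, t, h, -⟩; simp at h

private lemma not_hasIII_nil : ¬ HasIII E lt ([] : List V) := by
  rintro ⟨p, u, q, t₁, t₂, h, -⟩; simp at h

private lemma not_PIp_nil {a : V} : ¬ PIp E ([] : List V) a := by
  rintro ⟨p, u, h, -⟩; simp at h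

private lemma not_PIIp_nil {a : V} : ¬ PIIp E ([] : List V) a := by
  rintro ⟨p, u, h, -⟩; simp at h

private lemma not_PIIIp_nil {a : V} : ¬ PIIIp E lt ([] : List V) a := by
  rintro ⟨p, u, t₁, h, -⟩; simp at h

end Aux

section DFAconstr

open Classical in
private noncomputable def hkDFA {V : Type*} [Fintype V] [LinearOrder V] (E : V → V → Prop) :
    DFA V (Bool × (Fin (Fintype.card V) → Bool × Bool × Bool)) where
  step s b :=
    (s.1 || (s.2 (Fintype.equivFin V b)).1 || (s.2 (Fintype.equivFin V b)).2.1 ||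
        (s.2 (Fintype.equivFin V b)).2.2,
     fun i =>
       (decide ((Fintype.equivFin V).symm i = b) ||
          (decide (¬ E b ((Fintype.equivFin V).symm i)) && (s.2 i).1),
        decide ((Fintype.equivFin V).symm i = b) ||
          (decide (¬ E ((Fintype.equivFin V).symm i) b) && (s.2 i).2.1),
        decide ((Fintype.equivFin V).symm i ≠ b ∧ ¬ E b ((Fintype.equivFin V).symm i) ∧
            ¬ E ((Fintype.equivFin V).symm i) b) &&
          (decide ((Fintype.equivFin V).symm i < b) || (s.2 i).2.2)))
  start := (false, fun _ => (false, false, false))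
  accept := {s | s.1 = false}

open Classical in
private lemma hkDFA_eval {V : Type*} [Fintype V] [LinearOrder V] (E : V → V → Prop)
    (w : List V) :
    (hkDFA E).eval w =
      (decide (HasI E w ∨ HasII E w ∨ HasIII E (· < ·) w),
       fun i => (decide (PIp E w ((Fintype.equivFin V).symm i)),
                 decide (PIIp E w ((Fintype.equivFin V).symm i)),
                 decide (PIIIp E (· < ·) w ((Fintype.equivFin V).symm i)))) := by
  induction w using List.reverseRecOn with
  | nil =>
    rw [DFA.eval_nil]
    refine Prod.ext ?_ (funext fun i => ?_)
    · simp [hkDFA, not_hasI_nil E, not_hasII_nil E, not_hasIII_nil E (· < ·)]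
    · simp [hkDFA, not_PIp_nil E, not_PIIp_nil E, not_PIIIp_nil E (· < ·)]
  | append_singleton w b ih =>
    rw [DFA.eval_append_singleton, ih]
    simp only [hkDFA]
    refine Prod.ext ?_ (funext fun i => ?_)
    · simp only [Equiv.symm_apply_apply]
      simp only [← Bool.decide_and, ← Bool.decide_or, decide_eq_decide]
      rw [hasI_snoc, hasII_snoc, hasIII_snoc]
      tauto
    · refine Prod.ext ?_ (Prod.ext ?_ ?_)
      · simp only [← Bool.decide_and, ← Bool.decide_or, decide_eq_decide]
        rw [PIp_snoc]
      · simp only [← Bool.decide_and, ← Bool.decide_or, decide_eq_decide]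
        rw [PIIp_snoc]
      · simp only [← Bool.decide_and, ← Bool.decide_or, decide_eq_decide]
        rw [PIIIp_snoc]

end DFAconstr



/-- The set of reduced words is a regular language: it is the language accepted
by a deterministic finite automaton (with finitely many states) over the alphabet `V`. -/
theorem reduced_words_regular
    {V : Type*} [Fintype V] [LinearOrder V] (E : V → V → Prop)
    (hsimple : SimpleOriented E) :
    ∃ (σ : Type) (_ : Fintype σ) (M : DFA V σ),
      M.accepts = {w : List V | Reduced E (· < ·) w} := by
  classical
  refine ⟨Bool × (Fin (Fintype.card V) → Bool × Bool × Bool), inferInstance, hkDFA E, ?_⟩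
  ext w
  rw [DFA.mem_accepts]
  show ((hkDFA E).eval w).1 = false ↔ _
  rw [hkDFA_eval]
  simp only [decide_eq_false_iff_not, Set.mem_setOf_eq, reduced_iff]
  change _ ↔ (¬ HasI E w ∧ ¬ HasII E w ∧ ¬ HasIII E (· < ·) w)
  tauto
end

section
/- Let X be a finite alphabet, let L ⊆ X* be a regular language and let k ≥ 0 be an integer. Then there exists C > 0 such that the number of words in L of length at most n is at most C·(n+1)^k for all n ∈ ℕ if and only if L can be written as a finite union of languages of the form {v₀ w₁^{a₁} v₁ w₂^{a₂} v₂ ⋯ v_{s−1} w_s^{a_s} v_s : a₁, …, a_s ∈ ℕ}, where v₀, …, v_s, w₁, …, w_s ∈ X* are fixed words and 0 ≤ s ≤ k. -/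
open Relation

/-- The language `{v₀ w₁^{a₁} v₁ ⋯ w_s^{a_s} v_s : a₁,…,a_s ∈ ℕ}` determined by the fixed words
`v₀,…,v_s` and `w₁,…,w_s`. -/
def starLang {X : Type*} (s : ℕ) (vs : Fin (s + 1) → List X) (ws : Fin s → List X) :
    Set (List X) :=
  {u | ∃ a : Fin s → ℕ,
    u = vs 0 ++ (List.ofFn (fun i : Fin s => wpow (ws i) (a i) ++ vs i.succ)).flatten}

namespace PG

/-! ### word power basics -/

theorem wpow_zero {V : Type*} (w : List V) : wpow w 0 = [] := rfl

theorem wpow_succ {V : Type*} (w : List V) (m : ℕ) : wpow w (m+1) = w ++ wpow w m := by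
  simp [wpow, List.replicate_succ]

theorem length_wpow {V : Type*} (w : List V) (m : ℕ) : (wpow w m).length = m * w.length := by
  induction m with
  | zero => simp [wpow]
  | succ m ih => simp [wpow_succ, ih, Nat.succ_mul, Nat.add_comm]

variable {X : Type*} {σ : Type*} (M : DFA X σ)

/-- state run: the sequence of states after reading each successive letter. -/
def srun : σ → List X → List σ
  | _, [] => []
  | q, x :: u => M.step q x :: srun (M.step q x) u

@[simp] theorem srun_nil (q : σ) : srun M q [] = [] := rfl

@[simp] theorem srun_cons (q : σ) (x : X) (u : List X) :
    srun M q (x :: u) = M.step q x :: srun M (M.step q x) u := rfl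

theorem srun_append (q : σ) (u v : List X) :
    srun M q (u ++ v) = srun M q u ++ srun M (M.evalFrom q u) v := by
  induction u generalizing q with
  | nil => simp [DFA.evalFrom]
  | cons x u ih => simp [srun, ih, DFA.evalFrom]

theorem length_srun (q : σ) (u : List X) : (srun M q u).length = u.length := by
  induction u generalizing q with
  | nil => rfl
  | cons x u ih => simp [srun, ih]

theorem evalFrom_take_append (q : σ) (u : List X) (t : ℕ) :
    M.evalFrom q u = M.evalFrom (M.evalFrom q (u.take t)) (u.drop t) := by
  conv_lhs => rw [← List.take_append_drop t u]
  rw [DFA.evalFrom_of_append]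

theorem mem_srun {p q : σ} {u : List X} (h : p ∈ srun M q u) :
    ∃ t, 1 ≤ t ∧ t ≤ u.length ∧ M.evalFrom q (u.take t) = p := by
  induction u generalizing q with
  | nil => simp [srun] at h
  | cons x u ih =>
    rcases List.mem_cons.mp h with h | h
    · exact ⟨1, le_refl _, by simp, by simp [DFA.evalFrom, h]⟩
    · rcases ih (q := M.step q x) h with ⟨t, h1, h2, h3⟩
      exact ⟨t+1, by omega, by simpa using h2, by simpa [DFA.evalFrom] using h3⟩

theorem evalFrom_wpow {q : σ} {w : List X} (h : M.evalFrom q w = q) (m : ℕ) :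
    M.evalFrom q (wpow w m) = q := by
  induction m with
  | zero => simp [wpow, DFA.evalFrom]
  | succ m ih => rw [wpow_succ, DFA.evalFrom_of_append, h, ih]

theorem srun_wpow {q : σ} {w : List X} (h : M.evalFrom q w = q) (m : ℕ) :
    srun M q (wpow w m) = (List.replicate m (srun M q w)).flatten := by
  induction m with
  | zero => simp [wpow]
  | succ m ih => rw [wpow_succ, srun_append, h, ih, List.replicate_succ, List.flatten_cons]

/-- reachability -/
def Rch (p r : σ) : Prop := ∃ y : List X, M.evalFrom p y = r

theorem Rch.refl (p : σ) : Rch M p p := ⟨[], rfl⟩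

theorem Rch.trans {p r s : σ} (h : Rch M p r) (h' : Rch M r s) : Rch M p s := by
  obtain ⟨y, hy⟩ := h; obtain ⟨z, hz⟩ := h'
  exact ⟨y ++ z, by rw [DFA.evalFrom_of_append, hy, hz]⟩

/-- relevant states: on an accepting run -/
def Rel (p : σ) : Prop := ∃ u r : List X, M.evalFrom M.start u = p ∧ u ++ r ∈ M.accepts

/-- no-branching property (consequence of polynomial growth) -/
def NB : Prop := ∀ p : σ, Rel M p → ∀ x y : X,
    Rch M (M.step p x) p → Rch M (M.step p y) p → x = y

/-- the basic pumped-word pattern -/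
def build {s : ℕ} (v : Fin (s+1) → List X) (c : Fin s → List X) (b : Fin s → ℕ) : List X :=
  v 0 ++ (List.ofFn (fun i : Fin s => wpow (c i) (b i) ++ v i.succ)).flatten

theorem build_eq_starLang {s : ℕ} (v : Fin (s+1) → List X) (c : Fin s → List X) :
    starLang s v c = {u | ∃ b, u = build v c b} := rfl

theorem build_zero (v : Fin 1 → List X) (c : Fin 0 → List X) (b : Fin 0 → ℕ) :
    build v c b = v 0 := by simp [build]

theorem build_cons {s : ℕ} (vz : List X) (v : Fin (s+1) → List X) (cz : List X)
    (c : Fin s → List X) (bz : ℕ) (b : Fin s → ℕ) :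
    build (Fin.cons vz v) (Fin.cons cz c) (Fin.cons bz b)
      = vz ++ wpow cz bz ++ build v c b := by
  simp [build, List.ofFn_succ, Fin.cons_succ, Fin.cons_zero, List.flatten_cons,
    List.append_assoc]

/-- prepending a word to `v 0` -/
theorem build_prepend {s : ℕ} (w : List X) (v : Fin (s+1) → List X) (c : Fin s → List X)
    (b : Fin s → ℕ) :
    build (fun i => if i = 0 then w ++ v 0 else v i) c b = w ++ build v c b := by
  simp only [build]
  have h1 : ∀ i : Fin s, (fun i => if i = 0 then w ++ v 0 else v i) i.succ = v i.succ := by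
    intro i; simp [Fin.succ_ne_zero]
  simp [h1]

end PG

namespace PG
variable {X : Type*} {σ : Type*} (M : DFA X σ)

/-- `p` is in the (mutual-reachability) class of the anchor `q`. -/
def InCl (q p : σ) : Prop := Rch M p q ∧ Rch M q p

/-- all states along the path `y` from `p` lie in the class of `q`. -/
def PIC (q p : σ) (y : List X) : Prop := ∀ t ≤ y.length, InCl M q (M.evalFrom p (y.take t))

theorem rel_of_inCl {q p : σ} (hq : Rel M q) (h : InCl M q p) : Rel M p := by
  obtain ⟨u, r, hu, hur⟩ := hq
  obtain ⟨⟨g, hg⟩, ⟨f, hf⟩⟩ := h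
  refine ⟨u ++ f, g ++ r, by rw [DFA.evalFrom_of_append, hu, hf], ?_⟩
  rw [DFA.mem_accepts] at hur ⊢
  have : M.eval (u ++ f ++ (g ++ r)) = M.eval (u ++ r) := by
    simp only [DFA.eval, DFA.evalFrom_of_append, hu, hf, hg]
  rw [this]; exact hur

theorem pic_zero {q p : σ} {y : List X} (h : PIC M q p y) : InCl M q p := by
  simpa using h 0 (Nat.zero_le _)

theorem pic_shift {q p : σ} {a : X} {y : List X} (h : PIC M q p (a :: y)) :
    PIC M q (M.step p a) y := by
  intro t ht
  have := h (t+1) (by simpa using ht)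
  simpa [DFA.evalFrom] using this

/-- **Forcing lemma**: two in-class paths out of the same state agree. -/
theorem forced (hnb : NB M) {q : σ} (hq : Rel M q) :
    ∀ (y : List X) {z : List X} (p : σ), y.length ≤ z.length →
      PIC M q p y → (∀ t ≤ y.length, InCl M q (M.evalFrom p (z.take t))) →
      y = z.take y.length := by
  intro y
  induction y with
  | nil => intro z p _ _ _; simp
  | cons a y ih =>
    intro z p hlen hy hz
    obtain ⟨b, z', rfl⟩ : ∃ b z', z = b :: z' := by
      cases z with
      | nil => simp at hlen
      | cons b z' => exact ⟨b, z', rfl⟩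
    have hp : InCl M q p := pic_zero M hy
    have hrelp : Rel M p := rel_of_inCl M hq hp
    have hab : a = b := by
      apply hnb p hrelp
      · have h1 := hy 1 (by simp)
        simp only [List.take_cons, List.take_zero, DFA.evalFrom, List.foldl_cons,
          List.foldl_nil] at h1
        exact Rch.trans M h1.1 hp.2
      · have h1 := hz 1 (by simp)
        simp only [List.take_cons, List.take_zero, DFA.evalFrom, List.foldl_cons,
          List.foldl_nil] at h1
        exact Rch.trans M h1.1 hp.2
    subst hab
    have htail : y = z'.take y.length := by
      refine ih (M.step p a) (by simpa using hlen) (pic_shift M hy) ?_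
      intro t ht
      have := hz (t+1) (by simpa using ht)
      simpa [DFA.evalFrom] using this
    rw [List.length_cons, List.take_succ_cons, ← htail]

/-- **Return detection**: if the run of `w` from `q` contains a pumped cycle at a state `e`
from whose class `q` is reachable, then the run of `w` itself returns to `q`. -/
theorem return_detect (hnb : NB M) {q : σ} (hq : Rel M q) :
    ∀ (n : ℕ) (y u z r : List X) (e : σ), y.length ≤ n →
      M.evalFrom q u = e → z ≠ [] → M.evalFrom e z = e → M.evalFrom e y = q →
      ∃ t, 1 ≤ t ∧ t ≤ (u ++ z ++ r).length ∧ M.evalFrom q ((u ++ z ++ r).take t) = q := by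
  have base : ∀ (u z r : List X), M.evalFrom q u = q → z ≠ [] → M.evalFrom q z = q →
      ∃ t, 1 ≤ t ∧ t ≤ (u ++ z ++ r).length ∧ M.evalFrom q ((u ++ z ++ r).take t) = q := by
    intro u z r hu hz he
    refine ⟨(u ++ z).length, ?_, ?_, ?_⟩
    · have : z.length ≥ 1 := List.length_pos_iff.mpr hz
      simp only [List.length_append]; omega
    · simp [List.length_append]
    · rw [List.take_left, DFA.evalFrom_of_append, hu, he]
  intro n
  induction n with
  | zero =>
    intro y u z r e hn hu hz he hy
    have : y = [] := List.eq_nil_of_length_eq_zero (Nat.le_zero.mp hn)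
    subst this
    simp only [DFA.evalFrom, List.foldl_nil] at hy
    subst hy
    exact base u z r hu hz he
  | succ n ih =>
    intro y u z r e hn hu hz he hy
    rcases Nat.eq_zero_or_pos y.length with h0 | hpos
    · have : y = [] := List.eq_nil_of_length_eq_zero h0
      subst this
      simp only [DFA.evalFrom, List.foldl_nil] at hy
      subst hy
      exact base u z r hu hz he
    · have hqe : Rch M q e := ⟨u, hu⟩
      have heq : Rch M e q := ⟨y, hy⟩
      have piczy : ∀ m ≤ z.length, InCl M q (M.evalFrom e (z.take m)) := by
        intro m hm
        constructor
        · refine Rch.trans M ⟨z.drop m, ?_⟩ heq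
          rw [← DFA.evalFrom_of_append, List.take_append_drop, he]
        · exact Rch.trans M hqe ⟨z.take m, rfl⟩
      have picy : PIC M q e y := by
        intro t ht
        constructor
        · exact ⟨y.drop t, by rw [← DFA.evalFrom_of_append, List.take_append_drop, hy]⟩
        · exact Rch.trans M hqe ⟨y.take t, rfl⟩
      rcases le_or_gt y.length z.length with hle | hlt
      · -- y is a prefix of z
        have hyz : y = z.take y.length :=
          forced M hnb hq y e hle picy (fun t ht => piczy t (le_trans ht hle))
        refine ⟨u.length + y.length, by omega, ?_, ?_⟩
        · simp only [List.length_append]; omega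
        · rw [List.append_assoc, List.take_length_add_append, DFA.evalFrom_of_append, hu,
            List.take_append_of_le_length hle, ← hyz, hy]
      · -- z is a prefix of y; loop around and recurse
        have hzy : z = y.take z.length :=
          forced M hnb hq z e (le_of_lt hlt)
            (fun t ht => piczy t ht) (fun t ht => picy t (le_trans ht (le_of_lt hlt)))
        have hstep : M.evalFrom e (y.take z.length) = e := by rw [← hzy, he]
        have hy' : M.evalFrom e (y.drop z.length) = q := by
          rw [← hy, evalFrom_take_append M e y z.length, hstep]
        have hlen' : (y.drop z.length).length ≤ n := by
          have hz1 : 1 ≤ z.length := List.length_pos_iff.mpr hz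
          simp only [List.length_drop]; omega
        exact ih (y.drop z.length) u z r e hlen' hu hz he hy'

theorem wpow_one {V : Type*} (w : List V) : wpow w 1 = w := by
  simp [wpow_succ, wpow_zero]

theorem build_succ {s : ℕ} (v : Fin (s+2) → List X) (c : Fin (s+1) → List X)
    (b : Fin (s+1) → ℕ) :
    build v c b = v 0 ++ wpow (c 0) (b 0) ++
      build (fun i : Fin (s+1) => v i.succ) (fun i : Fin s => c i.succ)
        (fun i : Fin s => b i.succ) := by
  have h := build_cons (v 0) (fun i : Fin (s+1) => v i.succ) (c 0)
    (fun i : Fin s => c i.succ) (b 0) (fun i : Fin s => b i.succ)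
  rw [← h]
  congr 1 <;> exact (Fin.cons_self_tail _).symm

theorem build_update_zero {s : ℕ} (v : Fin (s+2) → List X) (c : Fin (s+1) → List X)
    (b : Fin (s+1) → ℕ) (hv0 : v 0 = []) :
    build v c (Function.update b 0 (b 0 + 1)) = c 0 ++ build v c b := by
  rw [build_succ v c (Function.update b 0 (b 0 + 1)), build_succ v c b, hv0]
  have h1 : ∀ i : Fin s, Function.update b 0 (b 0 + 1) i.succ = b i.succ := fun i =>
    Function.update_of_ne (Fin.succ_ne_zero i) _ _
  have h2 : Function.update b 0 (b 0 + 1) 0 = b 0 + 1 := Function.update_self _ _ _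
  simp only [h1, h2, wpow_succ, List.nil_append, List.append_assoc]

theorem count_flatten_replicate [DecidableEq σ] (p : σ) (l : List σ) (m : ℕ) :
    ((List.replicate m l).flatten).count p = m * l.count p := by
  rw [List.count_flatten, List.map_replicate, List.sum_replicate, smul_eq_mul]

theorem count_srun_eq_one [DecidableEq σ] {q : σ} {u : List X} (hu : u ≠ [])
    (h : M.evalFrom q u = q)
    (hmin : ∀ t, 1 ≤ t → t < u.length → M.evalFrom q (u.take t) ≠ q) :
    (srun M q u).count q = 1 := by
  obtain ⟨u', a, rfl⟩ : ∃ u' a, u = u' ++ [a] := by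
    rcases List.eq_nil_or_concat u with h' | ⟨u', a, h'⟩
    · exact absurd h' hu
    · exact ⟨u', a, by simpa [List.concat_eq_append] using h'⟩
  rw [srun_append]
  have hlast : srun M (M.evalFrom q u') [a] = [M.evalFrom q (u' ++ [a])] := by
    simp [srun, DFA.evalFrom_of_append, DFA.evalFrom]
  rw [hlast, h, List.count_append]
  have h0 : (srun M q u').count q = 0 := by
    rw [List.count_eq_zero]
    intro hq
    obtain ⟨t, ht1, ht2, ht3⟩ := mem_srun M hq
    refine hmin t ht1 ?_ ?_
    · simp only [List.length_append, List.length_cons]; omega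
    · rwa [List.take_append_of_le_length ht2]
  simp [h0]

theorem length_build {s : ℕ} (v : Fin (s+1) → List X) (c : Fin s → List X) (b : Fin s → ℕ) :
    (build v c b).length
      = (v 0).length + ∑ i : Fin s, (b i * (c i).length + (v i.succ).length) := by
  simp only [build, List.length_append, List.length_flatten, List.map_ofFn]
  rw [List.sum_ofFn]
  congr 1
  refine Finset.sum_congr rfl fun i _ => ?_
  simp [Function.comp, length_wpow]

theorem build_injective [DecidableEq σ] {s : ℕ} {q : σ} {v : Fin (s+1) → List X}
    {c : Fin s → List X} {e : Fin s → σ} {K : Fin s → ℕ}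
    (hK : ∀ (b : Fin s → ℕ) (i : Fin s), (srun M q (build v c b)).count (e i) = b i + K i) :
    Function.Injective (build v c) := by
  intro b b' hbb
  funext i
  have h1 := hK b i
  have h2 := hK b' i
  rw [hbb] at h1
  omega

end PG


namespace PG
variable {X : Type*} {σ : Type*} (M : DFA X σ)

theorem first_return_le_card [DecidableEq σ] [Fintype σ] (hnb : NB M) {q : σ} (hq : Rel M q)
    (w : List X) (ℓ : ℕ) (hl1 : 1 ≤ ℓ) (hlw : ℓ ≤ w.length)
    (hc0 : M.evalFrom q (w.take ℓ) = q)
    (hmin : ∀ t, 1 ≤ t → t < ℓ → M.evalFrom q (w.take t) ≠ q) :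
    ℓ ≤ Fintype.card σ := by
  set L := w.take ℓ with hL
  have hLl : L.length = ℓ := by rw [hL, List.length_take]; omega
  set f : ℕ → σ := fun t => M.evalFrom q (w.take t) with hf
  have hwL : ∀ t, t ≤ ℓ → L.take t = w.take t := by
    intro t ht; rw [hL, List.take_take, min_eq_left ht]
  have hfseg : ∀ a m, a + m ≤ ℓ → M.evalFrom (f a) ((L.drop a).take m) = f (a + m) := by
    intro a m ham
    simp only [hf]
    rw [← hwL a (by omega), ← DFA.evalFrom_of_append, ← List.take_add, hwL (a+m) ham]
  have hfl : f ℓ = q := by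
    simp only [hf]
    rw [← hwL ℓ le_rfl, ← hLl, List.take_length]
    exact hc0
  have hfq : ∀ a, a ≤ ℓ → M.evalFrom (f a) (L.drop a) = q := by
    intro a ha
    have h1 := hfseg a (ℓ - a) (by omega)
    rw [List.take_of_length_le (by simp [List.length_drop, hLl])] at h1
    rw [h1, show a + (ℓ - a) = ℓ by omega, hfl]
  have hInCl : ∀ a, a ≤ ℓ → InCl M q (f a) := by
    intro a ha
    exact ⟨⟨L.drop a, hfq a ha⟩, ⟨w.take a, rfl⟩⟩
  have hnd : ((List.range ℓ).map f).Nodup := by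
    refine List.Nodup.map_on ?_ (List.nodup_range (n := ℓ))
    intro t1 h1 t2 h2 hfe
    rw [List.mem_range] at h1 h2
    by_contra hne
    wlog hlt : t1 < t2 generalizing t1 t2
    · exact this t2 h2 t1 h1 hfe.symm (Ne.symm hne) (by omega)
    have hy : (L.drop t2).length ≤ (L.drop t1).length := by
      simp only [List.length_drop]; omega
    have hld2 : (L.drop t2).length = ℓ - t2 := by simp [List.length_drop, hLl]
    have hpicy : PIC M q (f t1) (L.drop t2) := by
      intro t ht
      rw [hld2] at ht
      rw [hfe, hfseg t2 t (by omega)]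
      exact hInCl (t2 + t) (by omega)
    have hpicz : ∀ t ≤ (L.drop t2).length, InCl M q (M.evalFrom (f t1) ((L.drop t1).take t)) := by
      intro t ht
      rw [hld2] at ht
      rw [hfseg t1 t (by omega)]
      exact hInCl _ (by omega)
    have hfz := forced M hnb hq (L.drop t2) (z := L.drop t1) (f t1) hy hpicy hpicz
    have h1' : M.evalFrom (f t1) ((L.drop t1).take (L.drop t2).length) = q := by
      rw [← hfz, hfe]
      exact hfq t2 (by omega)
    rw [hld2, hfseg t1 (ℓ - t2) (by omega)] at h1'
    simp only [hf] at h1'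
    exact hmin (t1 + (ℓ - t2)) (by omega) (by omega) h1'
  have hcard := List.Nodup.length_le_card hnd
  simpa using hcard

/-- Full specification of the canonical decomposition of a word. -/
def DSpec [DecidableEq σ] [Fintype σ] (q : σ) (w : List X) : Prop :=
  ∃ (s : ℕ) (e : Fin s → σ) (c : Fin s → List X) (v : Fin (s+1) → List X),
    (∃ a : Fin s → ℕ, (∀ i, 1 ≤ a i) ∧ w = build v c a) ∧
    (∀ b : Fin s → ℕ, M.evalFrom q (build v c b) = M.evalFrom q w) ∧
    (∀ i, c i ≠ [] ∧ M.evalFrom (e i) (c i) = e i) ∧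
    (∀ i, ∃ u' r', w = u' ++ c i ++ r' ∧ M.evalFrom q u' = e i) ∧
    (∃ K : Fin s → ℕ, ∀ (b : Fin s → ℕ) (i : Fin s),
        (srun M q (build v c b)).count (e i) = b i + K i) ∧
    (∀ p : σ, (∀ i, p ∉ srun M (e i) (c i)) → ∀ b b' : Fin s → ℕ,
        (srun M q (build v c b)).count p = (srun M q (build v c b')).count p) ∧
    (∀ i t, 1 ≤ t → t < (c i).length → M.evalFrom (e i) ((c i).take t) ≠ e i) ∧
    (∀ i j : Fin s, i < j → ¬ Rch M (e j) (e i)) ∧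
    (∀ i : Fin s, Rch M (e i) q → v 0 = [] ∧ ∃ h0 : 0 < s, e ⟨0, h0⟩ = q ∧ i = ⟨0, h0⟩) ∧
    ((v 0).length ≤ (q :: srun M q w).toFinset.card) ∧
    (∀ i : Fin s, (v i.succ).length ≤ Fintype.card σ) ∧
    (∀ i, (c i).length ≤ Fintype.card σ)

theorem dspec_nil [DecidableEq σ] [Fintype σ] (q : σ) : DSpec M q [] := by
  refine ⟨0, Fin.elim0, Fin.elim0, fun _ => [], ⟨Fin.elim0, fun i => i.elim0, ?_⟩,
    fun b => ?_, fun i => i.elim0, fun i => i.elim0, ⟨Fin.elim0, fun b i => i.elim0⟩,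
    fun p _ b b' => ?_, fun i => i.elim0, fun i j _ => i.elim0, fun i => i.elim0,
    by simp, fun i => i.elim0, fun i => i.elim0⟩
  · rw [build_zero]
  · rw [build_zero]
  · rw [build_zero, build_zero]

end PG

namespace PG
variable {X : Type*} {σ : Type*} (M : DFA X σ)

theorem decomp [DecidableEq σ] [Fintype σ] (hnb : NB M) :
    ∀ (n : ℕ) (w : List X) (q : σ), w.length ≤ n →
      (∃ u, M.evalFrom M.start u = q ∧ u ++ w ∈ M.accepts) → DSpec M q w := by
  intro n
  induction n with
  | zero =>
    intro w q hlen _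
    rw [List.eq_nil_of_length_eq_zero (Nat.le_zero.mp hlen)]
    exact dspec_nil M q
  | succ n ih =>
    intro w q hlen hrel
    obtain ⟨u0, hu0, hu0w⟩ := hrel
    have hq : Rel M q := ⟨u0, w, hu0, hu0w⟩
    by_cases hret : ∃ t, 1 ≤ t ∧ t ≤ w.length ∧ M.evalFrom q (w.take t) = q
    case neg =>
      -- no return to q along w : peel one letter
      cases w with
      | nil => exact dspec_nil M q
      | cons x w' =>
        set q' := M.step q x with hq'
        have hrel' : ∃ u, M.evalFrom M.start u = q' ∧ u ++ w' ∈ M.accepts := by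
          refine ⟨u0 ++ [x], ?_, ?_⟩
          · rw [DFA.evalFrom_of_append, hu0]; rfl
          · simpa using hu0w
        obtain ⟨s', e', c', v', ⟨a', ha1, ha2⟩, hO2, hO5, hO7, ⟨K', hK'⟩, hO4, hO11, hO8,
          hO6, hO10a, hO10b, hO10c⟩ := ih w' q' (by simpa using hlen) hrel'
        have hnom : ∀ i, ¬ Rch M (e' i) q := by
          rintro i ⟨y, hy⟩
          obtain ⟨u'', r'', hw2, hu''⟩ := hO7 i
          have hw3 : x :: w' = (x :: u'') ++ c' i ++ r'' := by
            simp [hw2]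
          obtain ⟨t, ht1, ht2, ht3⟩ := return_detect M hnb hq y.length y (x :: u'')
            (c' i) r'' (e' i) le_rfl
            (by simp only [DFA.evalFrom, List.foldl_cons]; exact hu'')
            (hO5 i).1 (hO5 i).2 hy
          exact hret ⟨t, ht1, by rw [hw3]; exact ht2, by rw [hw3]; exact ht3⟩
        set v : Fin (s'+1) → List X := fun i => if i = 0 then [x] ++ v' 0 else v' i with hv
        have hbuild : ∀ b, build v c' b = x :: build v' c' b := by
          intro b; rw [hv, build_prepend]; rfl
        have hsr : ∀ b, srun M q (build v c' b) = q' :: srun M q' (build v' c' b) := by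
          intro b; rw [hbuild b]; rfl
        have hvsucc : ∀ i : Fin s', v i.succ = v' i.succ := by
          intro i; rw [hv]; simp [Fin.succ_ne_zero]
        refine ⟨s', e', c', v, ⟨a', ha1, ?_⟩, ?_, hO5, ?_, ?_, ?_, hO11, hO8, ?_, ?_, ?_, hO10c⟩
        · rw [hbuild, ← ha2]
        · intro b
          rw [hbuild]
          show M.evalFrom q' (build v' c' b) = M.evalFrom q' w'
          exact hO2 b
        · intro i
          obtain ⟨u'', r'', hw2, hu''⟩ := hO7 i
          exact ⟨x :: u'', r'', by rw [hw2]; simp, by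
            simp only [DFA.evalFrom, List.foldl_cons]; exact hu''⟩
        · refine ⟨fun i => K' i + (if q' = e' i then 1 else 0), fun b i => ?_⟩
          rw [hsr b, List.count_cons, hK' b i]
          simp only [beq_iff_eq]
          split_ifs with h1 h2 h2 <;>
            first
              | omega
              | (exact absurd h1.symm h2)
              | (exact absurd h2.symm h1)
        · intro p hp b b'
          rw [hsr b, hsr b', List.count_cons, List.count_cons, hO4 p hp b b']
        · intro i hri
          exact absurd hri (hnom i)
        · have hsrw : srun M q (x :: w') = q' :: srun M q' w' := rfl
          have hqnot : q ∉ (q' :: srun M q' w').toFinset := by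
            simp only [List.mem_toFinset, List.mem_cons]
            rintro (h | h)
            · refine hret ⟨1, le_refl _, by simp only [List.length_cons]; omega, ?_⟩
              have htk : (x :: w').take 1 = [x] := rfl
              rw [htk]
              show M.evalFrom q [x] = q
              simpa [DFA.evalFrom] using h.symm
            · obtain ⟨t, ht1, ht2, ht3⟩ := mem_srun M h
              refine hret ⟨t + 1, by omega, by simpa using ht2, ?_⟩
              rw [List.take_succ_cons]
              show M.evalFrom q' (w'.take t) = q
              exact ht3
          have hcard : (q :: srun M q (x :: w')).toFinset.card
              = (q' :: srun M q' w').toFinset.card + 1 := by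
            rw [hsrw, List.toFinset_cons (a := q), Finset.card_insert_of_notMem hqnot]
          have hv0 : v 0 = [x] ++ v' 0 := by rw [hv]; simp
          rw [hv0, hcard]
          simp only [List.length_append, List.length_singleton]
          omega
        · intro i; rw [hvsucc i]; exact hO10b i
    case pos =>
      set ℓ := Nat.find hret with hℓ
      obtain ⟨hl1, hlw, hc0⟩ := Nat.find_spec hret
      have hmin : ∀ t, 1 ≤ t → t < ℓ → M.evalFrom q (w.take t) ≠ q := by
        intro t h1 h2 h3
        exact Nat.find_min hret h2 ⟨h1, by omega, h3⟩
      have f3 : ℓ ≤ Fintype.card σ := first_return_le_card M hnb hq w ℓ hl1 hlw hc0 hmin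
      set c0 := w.take ℓ with hc0def
      set w₂ := w.drop ℓ with hw2def
      have hw_split : w = c0 ++ w₂ := (List.take_append_drop ℓ w).symm
      have hlc0 : c0.length = ℓ := by
        rw [hc0def, List.length_take]; omega
      have hc0ne : c0 ≠ [] := by
        intro h
        rw [h] at hlc0
        simp at hlc0
        omega
      have hc0take : ∀ t, t ≤ ℓ → c0.take t = w.take t := by
        intro t ht
        rw [hc0def, List.take_take, min_eq_left ht]
      have hc0min : ∀ t, 1 ≤ t → t < ℓ → M.evalFrom q (c0.take t) ≠ q := by
        intro t h1 h2
        rw [hc0take t (le_of_lt h2)]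
        exact hmin t h1 h2
      have f2 : (srun M q c0).count q = 1 := by
        refine count_srun_eq_one M hc0ne hc0 ?_
        intro t h1 h2
        rw [hlc0] at h2
        exact hc0min t h1 h2
      have picc : ∀ (d : List X), M.evalFrom q d = q →
          ∀ t ≤ d.length, InCl M q (M.evalFrom q (d.take t)) := by
        intro d hd t _
        exact ⟨⟨d.drop t, by rw [← DFA.evalFrom_of_append, List.take_append_drop, hd]⟩,
          ⟨d.take t, rfl⟩⟩
      obtain ⟨s', e', c', v', ⟨a', ha1, ha2⟩, hO2, hO5, hO7, ⟨K', hK'⟩, hO4, hO11, hO8,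
        hO6, hO10a, hO10b, hO10c⟩ := ih w₂ q
        (by rw [hw2def]; simp only [List.length_drop]; omega)
        ⟨u0 ++ c0, by rw [DFA.evalFrom_of_append, hu0, hc0],
          by rw [List.append_assoc, ← hw_split]; exact hu0w⟩
      by_cases hmerge : ∃ i, Rch M (e' i) q
      · -- MERGE with the first inner segment
        obtain ⟨i0, hri0⟩ := hmerge
        obtain ⟨hv0, h0pos, he0, hi0⟩ := hO6 i0 hri0
        obtain ⟨s'', rfl⟩ : ∃ s'', s' = s'' + 1 := ⟨s' - 1, by omega⟩
        have he0' : e' 0 = q := by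
          have h00 : (⟨0, h0pos⟩ : Fin (s''+1)) = 0 := by ext; simp
          rw [← h00]; exact he0
        have hc'cyc : M.evalFrom q (c' 0) = q := by
          have := (hO5 0).2
          rwa [he0'] at this
        have hc'ne : c' 0 ≠ [] := (hO5 0).1
        have hcc : c' 0 = c0 := by
          rcases lt_trichotomy (c' 0).length c0.length with hlt | heq | hgt
          · exfalso
            have hfz := forced M hnb hq (c' 0) (z := c0) q (le_of_lt hlt)
              (fun t ht => picc (c' 0) hc'cyc t ht)
              (fun t ht => picc c0 hc0 t (le_trans ht (le_of_lt hlt)))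
            have hx : M.evalFrom q (w.take (c' 0).length) = q := by
              rw [← hc0take _ (by omega), ← hfz]
              exact hc'cyc
            exact hmin (c' 0).length (List.length_pos_iff.mpr hc'ne) (by omega) hx
          · have hfz := forced M hnb hq (c' 0) (z := c0) q (le_of_eq heq)
              (fun t ht => picc (c' 0) hc'cyc t ht)
              (fun t ht => picc c0 hc0 t (le_trans ht (le_of_eq heq)))
            rw [hfz, heq, List.take_length]
          · exfalso
            have hfz := forced M hnb hq c0 (z := c' 0) q (le_of_lt hgt)
              (fun t ht => picc c0 hc0 t ht)
              (fun t ht => picc (c' 0) hc'cyc t (le_trans ht (le_of_lt hgt)))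
            have hx : M.evalFrom (e' 0) ((c' 0).take c0.length) = e' 0 := by
              rw [he0', ← hfz]
              exact hc0
            exact hO11 0 c0.length (by omega) hgt hx
        refine ⟨s''+1, e', c', v', ⟨Function.update a' 0 (a' 0 + 1), ?_, ?_⟩, ?_, hO5, ?_,
          ⟨K', hK'⟩, hO4, hO11, hO8, hO6, ?_, hO10b, hO10c⟩
        · intro i
          rcases eq_or_ne i 0 with rfl | hne
          · rw [Function.update_self]; omega
          · rw [Function.update_of_ne hne]; exact ha1 i
        · rw [build_update_zero v' c' a' hv0, ← ha2, hcc]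
          exact hw_split
        · intro b
          rw [hO2 b]
          conv_rhs => rw [hw_split]
          rw [DFA.evalFrom_of_append, hc0]
        · intro i
          obtain ⟨u'', r'', hsp, hu''⟩ := hO7 i
          refine ⟨c0 ++ u'', r'', ?_, ?_⟩
          · rw [hw_split, hsp]; simp [List.append_assoc]
          · rw [DFA.evalFrom_of_append, hc0]; exact hu''
        · rw [hv0]; simp
      · -- NEW SEGMENT at q
        have hnom : ∀ i, ¬ Rch M (e' i) q := not_exists.mp hmerge
        set e : Fin (s'+1) → σ := Fin.cons q e' with he
        set c : Fin (s'+1) → List X := Fin.cons c0 c' with hc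
        set v : Fin (s'+2) → List X := Fin.cons [] v' with hv
        have hbuild : ∀ b : Fin (s'+1) → ℕ,
            build v c b = wpow c0 (b 0) ++ build v' c' (fun j => b j.succ) := by
          intro b
          conv_lhs => rw [← Fin.cons_self_tail b]
          rw [hv, hc, build_cons]
          rfl
        have hsr : ∀ b : Fin (s'+1) → ℕ, srun M q (build v c b)
            = (List.replicate (b 0) (srun M q c0)).flatten
              ++ srun M q (build v' c' (fun j => b j.succ)) := by
          intro b
          rw [hbuild b, srun_append, evalFrom_wpow M hc0, srun_wpow M hc0]
        have hnotq : ∀ j, q ∉ srun M (e' j) (c' j) := by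
          intro j hmem
          obtain ⟨t, _, ht2, ht3⟩ := mem_srun M hmem
          exact hnom j ⟨(c' j).take t, ht3⟩
        have hnotec0 : ∀ j, (srun M q c0).count (e' j) = 0 := by
          intro j
          rw [List.count_eq_zero]
          intro hmem
          obtain ⟨t, _, ht2, ht3⟩ := mem_srun M hmem
          refine hnom j ⟨c0.drop t, ?_⟩
          rw [← ht3, ← DFA.evalFrom_of_append, List.take_append_drop]
          exact hc0
        set K0 : ℕ := (srun M q (build v' c' (fun _ => 1))).count q with hK0
        refine ⟨s'+1, e, c, v, ⟨Fin.cons 1 a', ?_, ?_⟩, ?_, ?_, ?_, ⟨Fin.cons K0 K', ?_⟩,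
          ?_, ?_, ?_, ?_, by simp [hv], ?_, ?_⟩
        · intro i
          refine Fin.cases ?_ ?_ i
          · simp [Fin.cons_zero]
          · intro j; simpa [Fin.cons_succ] using ha1 j
        · rw [hbuild]
          simp only [Fin.cons_zero, Fin.cons_succ, wpow_one]
          rw [← ha2]
          exact hw_split
        · intro b
          rw [hbuild b, DFA.evalFrom_of_append, evalFrom_wpow M hc0, hO2]
          conv_rhs => rw [hw_split]
          rw [DFA.evalFrom_of_append, hc0]
        · intro i
          refine Fin.cases ?_ ?_ i
          · exact ⟨by simpa [hc] using hc0ne, by simp [he, hc]; exact hc0⟩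
          · intro j
            refine ⟨by simpa [hc] using (hO5 j).1, by simp [he, hc]; exact (hO5 j).2⟩
        · intro i
          refine Fin.cases ?_ ?_ i
          · refine ⟨[], w₂, by simpa [hc] using hw_split, by simp [he, DFA.evalFrom]⟩
          · intro j
            obtain ⟨u'', r'', hsp, hu''⟩ := hO7 j
            refine ⟨c0 ++ u'', r'', ?_, ?_⟩
            · rw [hw_split, hsp]; simp [hc, List.append_assoc]
            · rw [DFA.evalFrom_of_append, hc0]; simpa [he] using hu''
        · intro b i
          refine Fin.cases ?_ ?_ i
          · simp only [he, Fin.cons_zero]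
            rw [hsr b, List.count_append, count_flatten_replicate, f2, mul_one]
            have h4 := hO4 q hnotq (fun j => b j.succ) (fun _ => 1)
            rw [h4, ← hK0]
          · intro j
            simp only [he, Fin.cons_succ]
            rw [hsr b, List.count_append, count_flatten_replicate, hnotec0 j, mul_zero,
              zero_add, hK' (fun j => b j.succ) j]
        · intro p hp b b'
          have hp0 : p ∉ srun M q c0 := by
            have := hp 0
            simpa [he, hc] using this
          have hpt : ∀ j, p ∉ srun M (e' j) (c' j) := by
            intro j
            have := hp j.succ
            simpa [he, hc] using this
          rw [hsr b, hsr b', List.count_append, List.count_append,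
            count_flatten_replicate, count_flatten_replicate,
            List.count_eq_zero.mpr hp0, hO4 p hpt (fun j => b j.succ) (fun j => b' j.succ)]
          simp
        · intro i
          refine Fin.cases ?_ ?_ i
          · intro t h1 h2
            simp only [he, hc, Fin.cons_zero] at h2 ⊢
            rw [hlc0] at h2
            exact hc0min t h1 h2
          · intro j t h1 h2
            simp only [he, hc, Fin.cons_succ] at h2 ⊢
            exact hO11 j t h1 h2
        · intro i j hij
          rcases Fin.eq_zero_or_eq_succ j with rfl | ⟨j', rfl⟩
          · exact absurd hij (by simp [Fin.lt_def])
          · rcases Fin.eq_zero_or_eq_succ i with rfl | ⟨i', rfl⟩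
            · simpa [he] using hnom j'
            · have hij' : i' < j' := by rwa [Fin.succ_lt_succ_iff] at hij
              simpa [he] using hO8 i' j' hij'
        · intro i hri
          rcases Fin.eq_zero_or_eq_succ i with rfl | ⟨i', rfl⟩
          · refine ⟨by simp [hv], Nat.succ_pos s', ?_, ?_⟩
            · have h00 : (⟨0, Nat.succ_pos s'⟩ : Fin (s'+1)) = 0 := by ext; simp
              rw [h00]; simp [he]
            · ext; simp
          · exact absurd hri (by simpa [he] using hnom i')
        · intro i
          refine Fin.cases ?_ ?_ i
          · have hv1 : v (Fin.succ 0) = v' 0 := by simp [hv]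
            rw [hv1]
            exact le_trans hO10a (Finset.card_le_univ _)
          · intro j
            have hvj : v (Fin.succ j.succ) = v' j.succ := by simp [hv]
            rw [hvj]
            exact hO10b j
        · intro i
          refine Fin.cases ?_ ?_ i
          · simp only [hc, Fin.cons_zero]
            rw [hlc0]
            exact f3
          · intro j
            simpa [hc] using hO10c j

end PG

namespace PG

theorem poly_absurd (C A B : ℝ) (k : ℕ) (hC : 0 < C) (hA : 0 ≤ A) (hB : 0 ≤ B)
    (h : ∀ m : ℕ, ((m : ℝ) + 1) ^ (k+1) ≤ C * (A + B * m + 1) ^ k) : False := by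
  set D := C * (A + B + 1) ^ k with hD
  have hD0 : 0 < D := by positivity
  have hle : ∀ m : ℕ, (m : ℝ) + 1 ≤ D := by
    intro m
    have h1 : A + B * (m : ℝ) + 1 ≤ (A + B + 1) * ((m : ℝ) + 1) := by
      have hm : (0:ℝ) ≤ (m : ℝ) := Nat.cast_nonneg m
      nlinarith
    have h2 : (A + B * (m:ℝ) + 1) ^ k ≤ ((A + B + 1) * ((m:ℝ) + 1)) ^ k := by
      apply pow_le_pow_left₀ (by positivity) h1
    have h3 : ((m : ℝ) + 1) ^ (k+1) ≤ D * ((m:ℝ) + 1) ^ k := by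
      calc ((m : ℝ) + 1) ^ (k+1) ≤ C * (A + B * m + 1) ^ k := h m
        _ ≤ C * ((A + B + 1) * ((m:ℝ) + 1)) ^ k := by
            exact mul_le_mul_of_nonneg_left h2 (le_of_lt hC)
        _ = D * ((m:ℝ) + 1) ^ k := by rw [hD, mul_pow]; ring
    have h4 : (0:ℝ) < ((m:ℝ) + 1) ^ k := by positivity
    have h5 : ((m : ℝ) + 1) ^ (k+1) = ((m:ℝ) + 1) ^ k * ((m:ℝ) + 1) := pow_succ _ _
    rw [h5, mul_comm D (((m:ℝ)+1)^k)] at h3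
    exact le_of_mul_le_mul_left h3 h4
  have := hle (Nat.ceil D)
  have h6 : D ≤ (Nat.ceil D : ℝ) := Nat.le_ceil D
  linarith

end PG

namespace PG

theorem exp_absurd (C A B : ℝ) (k : ℕ) (hC : 0 < C) (hA : 0 ≤ A) (hB : 0 ≤ B)
    (h : ∀ m : ℕ, (2:ℝ) ^ m ≤ C * (A + B * m + 1) ^ k) : False := by
  refine poly_absurd C A (B * (k+1)) k hC hA (by positivity) ?_
  intro m
  have h1 := h ((k+1) * m)
  have h2 : ((m:ℝ) + 1) ^ (k+1) ≤ (2:ℝ) ^ ((k+1) * m) := by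
    have hm : (m:ℝ) + 1 ≤ (2:ℝ) ^ m := by
      have hnat : m + 1 ≤ 2 ^ m := Nat.lt_two_pow_self
      calc (m:ℝ) + 1 = ((m + 1 : ℕ) : ℝ) := by push_cast; ring
        _ ≤ ((2 ^ m : ℕ) : ℝ) := by exact_mod_cast hnat
        _ = (2:ℝ) ^ m := by push_cast; ring
    calc ((m:ℝ) + 1) ^ (k+1) ≤ ((2:ℝ) ^ m) ^ (k+1) :=
          pow_le_pow_left₀ (by positivity) hm _
      _ = (2:ℝ) ^ ((k+1) * m) := by rw [← pow_mul, mul_comm]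
  have h3 : A + B * ((k+1) * m : ℕ) + 1 = A + B * (k+1) * m + 1 := by
    push_cast; ring
  rw [h3] at h1
  exact le_trans h2 h1

/-- `NB` follows from polynomial growth of the accepted language. -/
theorem nb_of_growth {X : Type*} {σ : Type*} [Fintype X] (M : DFA X σ) (k : ℕ) (C : ℝ)
    (hC : 0 < C)
    (hG : ∀ n : ℕ, (({w ∈ M.accepts | w.length ≤ n}).ncard : ℝ) ≤ C * ((n:ℝ)+1)^k) :
    NB M := by
  intro p hrelp x y hx hy
  by_contra hxy
  obtain ⟨u, r, hu, hur⟩ := hrelp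
  obtain ⟨w1, hw1⟩ := hx
  obtain ⟨w2, hw2⟩ := hy
  set cyc1 : List X := x :: w1 with hcyc1
  set cyc2 : List X := y :: w2 with hcyc2
  have hev1 : M.evalFrom p cyc1 = p := hw1
  have hev2 : M.evalFrom p cyc2 = p := hw2
  -- flatten of cycles is a cycle
  have hflat : ∀ (l : List (List X)), (∀ d ∈ l, M.evalFrom p d = p) →
      M.evalFrom p l.flatten = p := by
    intro l
    induction l with
    | nil => intro _; rfl
    | cons d l ihl =>
      intro hl
      rw [List.flatten_cons, DFA.evalFrom_of_append, hl d (by simp)]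
      exact ihl (fun d' hd' => hl d' (by simp [hd']))
  set F : ∀ m, (Fin m → Bool) → List X :=
    fun m g => (List.ofFn fun i => if g i then cyc1 else cyc2).flatten with hF
  have hFcyc : ∀ m g, M.evalFrom p (F m g) = p := by
    intro m g
    refine hflat _ ?_
    intro d hd
    rw [List.mem_ofFn] at hd
    obtain ⟨i, rfl⟩ := hd
    by_cases hgi : g i
    · simpa [hgi] using hev1
    · simpa [hgi] using hev2
  set W : ∀ m, (Fin m → Bool) → List X := fun m g => u ++ F m g ++ r with hW
  have hWacc : ∀ m g, W m g ∈ M.accepts := by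
    intro m g
    rw [DFA.mem_accepts] at hur ⊢
    have : M.eval (W m g) = M.eval (u ++ r) := by
      simp only [hW, DFA.eval, DFA.evalFrom_of_append, hu, hFcyc]
    rw [this]; exact hur
  -- injectivity
  have hFinj : ∀ m (g g' : Fin m → Bool), F m g = F m g' → g = g' := by
    intro m
    induction m with
    | zero => intro g g' _; funext i; exact i.elim0
    | succ m ihm =>
      intro g g' hgg
      rw [hF] at hgg
      simp only [List.ofFn_succ, List.flatten_cons] at hgg
      have hg0 : g 0 = g' 0 := by
        by_contra hne
        have hhead := congrArg List.head? hgg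
        rcases Bool.eq_false_or_eq_true (g 0) with h1 | h1 <;>
          rcases Bool.eq_false_or_eq_true (g' 0) with h2 | h2
        · exact hne (h1.trans h2.symm)
        · rw [h1, h2] at hhead
          simp [hcyc1, hcyc2] at hhead
          exact hxy hhead
        · rw [h1, h2] at hhead
          simp [hcyc1, hcyc2] at hhead
          exact hxy hhead.symm
        · exact hne (h1.trans h2.symm)
      rw [hg0] at hgg
      have htail := List.append_cancel_left hgg
      have := ihm (fun i => g i.succ) (fun i => g' i.succ) (by rw [hF]; exact htail)
      funext i
      rcases Fin.eq_zero_or_eq_succ i with rfl | ⟨j, rfl⟩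
      · exact hg0
      · exact congrFun this j
  have hWinj : ∀ m, Function.Injective (W m) := by
    intro m g g' hgg
    rw [hW] at hgg
    simp only [List.append_assoc] at hgg
    have h1 := List.append_cancel_left hgg
    have h2 := List.append_cancel_right h1
    exact hFinj m g g' h2
  -- length bound
  set B : ℕ := max cyc1.length cyc2.length with hB
  have hWlen : ∀ m g, (W m g).length ≤ u.length + r.length + B * m := by
    intro m g
    have hF1 : (F m g).length ≤ B * m := by
      rw [hF]
      simp only [List.length_flatten, List.map_ofFn]
      rw [List.sum_ofFn]
      calc ∑ i : Fin m, (List.length ∘ fun i => if g i then cyc1 else cyc2) i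
          ≤ ∑ _i : Fin m, B := by
            refine Finset.sum_le_sum fun i _ => ?_
            simp only [Function.comp]
            split
            · exact le_max_left _ _
            · exact le_max_right _ _
        _ = B * m := by simp [Finset.sum_const, mul_comm]
    simp only [hW, List.length_append]
    linarith [hF1]
  -- counting
  have hcount : ∀ m : ℕ, (2:ℝ) ^ m ≤ C * ((u.length + r.length : ℝ) + B * m + 1) ^ k := by
    intro m
    set N : ℕ := u.length + r.length + B * m with hN
    have hsub : W m '' Set.univ ⊆ {w ∈ M.accepts | w.length ≤ N} := by
      rintro _ ⟨g, _, rfl⟩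
      exact ⟨hWacc m g, hWlen m g⟩
    have hfin : {w ∈ M.accepts | w.length ≤ N}.Finite := by
      refine Set.Finite.subset (List.finite_length_le X N) ?_
      intro w hw; exact hw.2
    have hcard1 : (W m '' Set.univ).ncard = 2 ^ m := by
      rw [Set.ncard_image_of_injective _ (hWinj m), Set.ncard_univ,
        Nat.card_eq_fintype_card]
      simp [Fintype.card_fun]
    have hcard2 : (2:ℕ) ^ m ≤ {w ∈ M.accepts | w.length ≤ N}.ncard := by
      rw [← hcard1]
      exact Set.ncard_le_ncard hsub hfin
    have hG' := hG N
    have : ((2:ℕ)^m : ℝ) ≤ ({w ∈ M.accepts | w.length ≤ N}.ncard : ℝ) := by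
      exact_mod_cast hcard2
    have h2 : (2:ℝ)^m ≤ C * ((N:ℝ) + 1)^k := by
      push_cast at this
      linarith
    rw [hN] at h2
    push_cast at h2
    convert h2 using 3
  exact exp_absurd C (u.length + r.length) B k hC (by positivity) (by positivity) hcount

end PG

namespace PG
variable {X : Type*}

theorem build_congr {s : ℕ} (v : Fin (s+1) → List X) (c : Fin s → List X) (a a' : Fin s → ℕ)
    (h : ∀ i, wpow (c i) (a i) = wpow (c i) (a' i)) : build v c a = build v c a' := by
  simp only [build]
  have : (fun i => wpow (c i) (a i) ++ v i.succ) = fun i => wpow (c i) (a' i) ++ v i.succ :=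
    funext fun i => by rw [h i]
  rw [this]

theorem wpow_nil {V : Type*} (m : ℕ) : wpow ([] : List V) m = [] := by
  induction m with
  | zero => rfl
  | succ m ihm => rw [wpow_succ, ihm]; rfl

/-- counting words of bounded length in a star language -/
theorem star_count [Fintype X] (s n : ℕ) (vs : Fin (s+1) → List X) (ws : Fin s → List X) :
    {w ∈ starLang s vs ws | w.length ≤ n}.ncard ≤ (n+1)^s := by
  classical
  set f : (Fin s → Fin (n+1)) → List X := fun b => build vs ws (fun i => (b i : ℕ)) with hf
  have hsub : {w ∈ starLang s vs ws | w.length ≤ n} ⊆ f '' Set.univ := by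
    rintro w ⟨⟨a, rfl⟩, hlen⟩
    have hbd : ∀ i, (ws i).length ≠ 0 → a i ≤ n := by
      intro i hne
      by_contra hgt
      push_neg at hgt
      have h1 := length_build vs ws a
      have h2 : a i * (ws i).length + (vs i.succ).length
          ≤ ∑ j : Fin s, (a j * (ws j).length + (vs j.succ).length) :=
        Finset.single_le_sum (f := fun j => a j * (ws j).length + (vs j.succ).length)
          (fun j _ => Nat.zero_le _) (Finset.mem_univ i)
      have h3 : n + 1 ≤ a i * (ws i).length := by
        have : 1 ≤ (ws i).length := by omega
        calc n + 1 ≤ a i := hgt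
          _ ≤ a i * (ws i).length := Nat.le_mul_of_pos_right _ (by omega)
      change (build vs ws a).length ≤ n at hlen
      omega
    refine ⟨fun i => if h : (ws i).length = 0 then ⟨0, by omega⟩
      else ⟨a i, by have := hbd i h; omega⟩, Set.mem_univ _,
      Eq.trans (build_congr vs ws _ a fun i => ?_) rfl⟩
    by_cases h : (ws i).length = 0
    · have hnil : ws i = [] := List.eq_nil_of_length_eq_zero h
      simp [hnil, wpow_nil, h]
    · simp [h]
  calc {w ∈ starLang s vs ws | w.length ≤ n}.ncard
      ≤ (f '' Set.univ).ncard := Set.ncard_le_ncard hsub (Set.toFinite _)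
    _ ≤ (Set.univ : Set (Fin s → Fin (n+1))).ncard := Set.ncard_image_le (Set.toFinite _)
    _ = (n+1)^s := by
        rw [Set.ncard_univ, Nat.card_eq_fintype_card]
        simp [Fintype.card_fun]

end PG

namespace PG

theorem ncard_iUnion_le_fin {α : Type*} (m : ℕ) (S : Fin m → Set α)
    (hf : ∀ i, (S i).Finite) : (⋃ i, S i).ncard ≤ ∑ i, (S i).ncard := by
  classical
  have h1 : (⋃ i, S i) = ↑(Finset.univ.biUnion fun i => (hf i).toFinset) := by
    ext w
    simp [Set.Finite.mem_toFinset]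
  rw [h1, Set.ncard_coe_finset]
  calc (Finset.univ.biUnion fun i => (hf i).toFinset).card
      ≤ ∑ i, ((hf i).toFinset).card := Finset.card_biUnion_le
    _ = ∑ i, (S i).ncard := by
        refine Finset.sum_congr rfl fun i _ => ?_
        rw [← Set.ncard_coe_finset, Set.Finite.coe_toFinset]

theorem backward_dir {X : Type*} [Fintype X] (L : Set (List X)) (k m : ℕ)
    (data : Fin m → Σ s : ℕ, (Fin (s + 1) → List X) × (Fin s → List X))
    (hk : ∀ i, (data i).1 ≤ k)
    (hL : L = ⋃ i, starLang (data i).1 (data i).2.1 (data i).2.2) :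
    ∃ C : ℝ, 0 < C ∧ ∀ n : ℕ,
      (({w ∈ L | w.length ≤ n}).ncard : ℝ) ≤ C * ((n : ℝ) + 1) ^ k := by
  refine ⟨m + 1, by positivity, fun n => ?_⟩
  have hsplit : {w ∈ L | w.length ≤ n}
      = ⋃ i, {w ∈ starLang (data i).1 (data i).2.1 (data i).2.2 | w.length ≤ n} := by
    rw [hL]
    ext w
    simp only [Set.mem_setOf_eq, Set.mem_iUnion]
    tauto
  have hfin : ∀ i : Fin m,
      {w ∈ starLang (data i).1 (data i).2.1 (data i).2.2 | w.length ≤ n}.Finite := by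
    intro i
    exact Set.Finite.subset (List.finite_length_le X n) (fun w hw => hw.2)
  have h1 : {w ∈ L | w.length ≤ n}.ncard ≤ m * (n+1)^k := by
    rw [hsplit]
    calc (⋃ i, {w ∈ starLang (data i).1 (data i).2.1 (data i).2.2 | w.length ≤ n}).ncard
        ≤ ∑ i : Fin m,
            {w ∈ starLang (data i).1 (data i).2.1 (data i).2.2 | w.length ≤ n}.ncard :=
          ncard_iUnion_le_fin m _ hfin
      _ ≤ ∑ _i : Fin m, (n+1)^k := by
          refine Finset.sum_le_sum fun i _ => ?_
          calc {w ∈ starLang (data i).1 (data i).2.1 (data i).2.2 | w.length ≤ n}.ncard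
              ≤ (n+1)^(data i).1 := star_count (data i).1 n (data i).2.1 (data i).2.2
            _ ≤ (n+1)^k := Nat.pow_le_pow_right (by omega) (hk i)
      _ = m * (n+1)^k := by simp [Finset.sum_const, mul_comm]
  have h2 : (({w ∈ L | w.length ≤ n}).ncard : ℝ) ≤ (m : ℝ) * ((n:ℝ)+1)^k := by
    have := h1
    have hcast : (({w ∈ L | w.length ≤ n}).ncard : ℝ) ≤ ((m * (n+1)^k : ℕ) : ℝ) := by
      exact_mod_cast this
    calc (({w ∈ L | w.length ≤ n}).ncard : ℝ) ≤ ((m * (n+1)^k : ℕ) : ℝ) := hcast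
      _ = (m : ℝ) * ((n:ℝ)+1)^k := by push_cast; ring
  have hpow : (0:ℝ) ≤ ((n:ℝ)+1)^k := by positivity
  nlinarith

end PG

namespace PG

theorem forward_dir {X : Type*} [Fintype X] {σ : Type} [Fintype σ] (M : DFA X σ)
    (k : ℕ) (C : ℝ) (hC : 0 < C)
    (hG : ∀ n : ℕ, (({w ∈ M.accepts | w.length ≤ n}).ncard : ℝ) ≤ C * ((n : ℝ) + 1) ^ k) :
    ∃ (m : ℕ) (data : Fin m → Σ s : ℕ, (Fin (s + 1) → List X) × (Fin s → List X)),
      (∀ i, (data i).1 ≤ k) ∧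
      M.accepts = ⋃ i, starLang (data i).1 (data i).2.1 (data i).2.2 := by
  classical
  have hnb : NB M := nb_of_growth M k C hC hG
  set 𝔅 := Fintype.card σ with h𝔅
  set T : Set (Σ s : ℕ, (Fin (s+1) → List X) × (Fin s → List X)) :=
    {d | d.1 ≤ k ∧ (∀ i, (d.2.1 i).length ≤ 𝔅) ∧ (∀ i, (d.2.2 i).length ≤ 𝔅) ∧
      starLang d.1 d.2.1 d.2.2 ⊆ M.accepts} with hT
  have hcov : ∀ w ∈ M.accepts, ∃ d ∈ T, w ∈ starLang d.1 d.2.1 d.2.2 := by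
    intro w hw
    obtain ⟨s, e, c, v, ⟨a, ha1, ha2⟩, hO2, hO5, hO7, ⟨K, hK⟩, hO4, hO11, hO8, hO6,
      hO10a, hO10b, hO10c⟩ :=
      decomp M hnb w.length w M.start le_rfl ⟨[], rfl, by simpa using hw⟩
    have hsubL : starLang s v c ⊆ M.accepts := by
      rintro u ⟨b, rfl⟩
      show build v c b ∈ (M.accepts : Language X)
      rw [DFA.mem_accepts]
      show M.evalFrom M.start (build v c b) ∈ M.accept
      rw [hO2 b]
      rw [DFA.mem_accepts] at hw
      exact hw
    have hvbound : ∀ i : Fin (s+1), (v i).length ≤ 𝔅 := by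
      intro i
      refine Fin.cases ?_ ?_ i
      · exact le_trans hO10a (Finset.card_le_univ _)
      · exact hO10b
    have hsk : s ≤ k := by
      by_contra hgt
      push_neg at hgt
      have hinj : Function.Injective (build v c) := build_injective M hK
      refine poly_absurd C (((s+1) * 𝔅 : ℕ) : ℝ) ((s * 𝔅 : ℕ) : ℝ) k hC
        (by positivity) (by positivity) ?_
      intro m
      set N : ℕ := (s+1) * 𝔅 + (s * 𝔅) * m with hN
      set F : (Fin s → Fin (m+1)) → List X := fun b => build v c (fun i => (b i : ℕ))
        with hF
      have hFinj : Function.Injective F := by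
        intro b b' hbb
        have hb := hinj hbb
        funext i
        exact Fin.val_injective (congrFun hb i)
      have hlen : ∀ b, (F b).length ≤ N := by
        intro b
        rw [hF]
        simp only
        rw [length_build]
        have hstep : ∀ i : Fin s, (b i : ℕ) * (c i).length + (v i.succ).length
            ≤ m * 𝔅 + 𝔅 := by
          intro i
          have h1 : (b i : ℕ) ≤ m := Fin.is_le _
          have h2 : (c i).length ≤ 𝔅 := hO10c i
          have h3 : (v i.succ).length ≤ 𝔅 := hvbound i.succ
          have := Nat.mul_le_mul h1 h2
          omega
        calc (v 0).length + ∑ i : Fin s, ((b i : ℕ) * (c i).length + (v i.succ).length)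
            ≤ 𝔅 + ∑ _i : Fin s, (m * 𝔅 + 𝔅) :=
              Nat.add_le_add (hvbound 0) (Finset.sum_le_sum fun i _ => hstep i)
          _ = 𝔅 + s * (m * 𝔅 + 𝔅) := by simp [Finset.sum_const, mul_comm]
          _ = N := by rw [hN]; ring
      have hsub : F '' Set.univ ⊆ {w' ∈ M.accepts | w'.length ≤ N} := by
        rintro _ ⟨b, _, rfl⟩
        exact ⟨hsubL ⟨fun i => ((b i : ℕ)), rfl⟩, hlen b⟩
      have hfin : {w' ∈ M.accepts | w'.length ≤ N}.Finite :=
        Set.Finite.subset (List.finite_length_le X N) (fun w' hw' => hw'.2)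
      have hcard1 : (F '' Set.univ).ncard = (m+1)^s := by
        rw [Set.ncard_image_of_injective _ hFinj, Set.ncard_univ, Nat.card_eq_fintype_card]
        simp [Fintype.card_fun]
      have hcard2 : (m+1)^(k+1) ≤ {w' ∈ M.accepts | w'.length ≤ N}.ncard := by
        calc (m+1)^(k+1) ≤ (m+1)^s := Nat.pow_le_pow_right (by omega) (by omega)
          _ = (F '' Set.univ).ncard := hcard1.symm
          _ ≤ _ := Set.ncard_le_ncard hsub hfin
      have hGN := hG N
      have hcast : (((m+1)^(k+1) : ℕ) : ℝ) ≤ (({w' ∈ M.accepts | w'.length ≤ N}).ncard : ℝ) :=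
        by exact_mod_cast hcard2
      have h2 : (((m+1)^(k+1) : ℕ) : ℝ) ≤ C * ((N:ℝ) + 1)^k := le_trans hcast hGN
      have h3 : ((m:ℝ)+1)^(k+1) = (((m+1)^(k+1) : ℕ) : ℝ) := by push_cast; ring
      rw [h3]
      refine le_trans h2 ?_
      rw [hN]
      push_cast
      apply le_of_eq
      ring_nf
    exact ⟨⟨s, v, c⟩, ⟨hsk, hvbound, hO10c, hsubL⟩, ⟨a, ha2⟩⟩
  have hTsub : T ⊆ ⋃ s ∈ Set.Iic k, Sigma.mk s ''
      {p : (Fin (s+1) → List X) × (Fin s → List X) |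
        (∀ i, (p.1 i).length ≤ 𝔅) ∧ ∀ i, (p.2 i).length ≤ 𝔅} := by
    rintro ⟨s, p⟩ ⟨h1, h2, h3, _⟩
    exact Set.mem_biUnion h1 ⟨p, ⟨h2, h3⟩, rfl⟩
  have hTfin : T.Finite := by
    refine Set.Finite.subset (Set.Finite.biUnion (Set.finite_Iic k) fun s _ =>
      Set.Finite.image _ ?_) hTsub
    have hws : {u : List X | u.length ≤ 𝔅}.Finite := List.finite_length_le X 𝔅
    have h1 : {f : Fin (s+1) → List X | ∀ i, (f i).length ≤ 𝔅}.Finite := by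
      refine (Set.Finite.pi fun _ : Fin (s+1) => hws).subset ?_
      intro f hf
      rw [Set.mem_pi]
      exact fun i _ => hf i
    have h2 : {f : Fin s → List X | ∀ i, (f i).length ≤ 𝔅}.Finite := by
      refine (Set.Finite.pi fun _ : Fin s => hws).subset ?_
      intro f hf
      rw [Set.mem_pi]
      exact fun i _ => hf i
    refine (h1.prod h2).subset ?_
    rintro ⟨f, g⟩ ⟨hf, hg⟩
    exact ⟨hf, hg⟩
  set lT := hTfin.toFinset.toList with hlT
  have hmemT : ∀ d, d ∈ lT ↔ d ∈ T := by
    intro d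
    rw [hlT, Finset.mem_toList, Set.Finite.mem_toFinset]
  refine ⟨lT.length, fun i => lT.get i, ?_, ?_⟩
  · intro i
    have hm : lT.get i ∈ T := (hmemT _).mp (lT.get_mem _)
    exact hm.1
  · ext u
    constructor
    · intro hu
      obtain ⟨d, hdT, hdu⟩ := hcov u hu
      obtain ⟨n, hget⟩ := List.mem_iff_get.mp ((hmemT d).mpr hdT)
      refine Set.mem_iUnion.mpr ⟨n, ?_⟩
      simp only
      rw [hget]
      exact hdu
    · intro hu
      obtain ⟨i, hi⟩ := Set.mem_iUnion.mp hu
      have hm : lT.get i ∈ T := (hmemT _).mp (lT.get_mem _)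
      exact hm.2.2.2 hi

end PG


/-- A regular language `L` over a finite alphabet has at most `C·(n+1)^k` words
of length at most `n` (for some `C > 0`) if and only if `L` is a finite union of languages of
the form `{v₀ w₁^{a₁} v₁ ⋯ w_s^{a_s} v_s}` with `0 ≤ s ≤ k`. -/
theorem regular_language_poly_growth_iff_star_form
    {X : Type*} [Fintype X] (L : Set (List X))
    (hreg : ∃ (σ : Type) (_ : Fintype σ) (M : DFA X σ), M.accepts = L)
    (k : ℕ) :
    (∃ C : ℝ, 0 < C ∧ ∀ n : ℕ, (({w ∈ L | w.length ≤ n}).ncard : ℝ) ≤ C * ((n : ℝ) + 1) ^ k) ↔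
    (∃ (m : ℕ) (data : Fin m → Σ s : ℕ, (Fin (s + 1) → List X) × (Fin s → List X)),
      (∀ i, (data i).1 ≤ k) ∧
      L = ⋃ i, starLang (data i).1 (data i).2.1 (data i).2.2) := by
  obtain ⟨σ, hσ, M, hML⟩ := hreg
  haveI := hσ
  subst hML
  constructor
  · rintro ⟨C, hC, hG⟩
    exact PG.forward_dir M k C hC hG
  · rintro ⟨m, data, hk, hL⟩
    exact PG.backward_dir M.accepts k m data hk hL
end

section
/- Let Θ be a finite simple oriented graph containing no two distinct simple cycles connected by an oriented path of length ≥ 0, and fix any linear order on its vertex set V. If w ∈ V* is a nonempty word such that w^m is reduced for every m ≥ 1, then every letter occurring in w is a cycle vertex of Θ. -/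
open Relation

section Aux
variable {V : Type*} {E : V → V → Prop}

lemma rtg_of_chain' : ∀ {l : List V}, l.Chain' E → ∀ {a b : V},
    l.head? = some a → l.getLast? = some b → ReflTransGen E a b := by
  intro l
  induction l with
  | nil => intro _ a b ha; simp at ha
  | cons x xs ih =>
    intro hc a b ha hb
    simp only [List.head?_cons, Option.some.injEq] at ha
    subst ha
    cases xs with
    | nil => simp at hb; subst hb; exact ReflTransGen.refl
    | cons y ys =>
      rw [List.getLast?_cons_cons] at hb
      obtain ⟨hxy, hch⟩ := List.isChain_cons_cons.1 hc
      exact ReflTransGen.head hxy (ih hch rfl hb)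

lemma rtg_mem_last {l : List V} (hc : l.Chain' E) {a b : V}
    (ha : a ∈ l) (hb : l.getLast? = some b) : ReflTransGen E a b := by
  obtain ⟨s, t, rfl⟩ := List.append_of_mem ha
  have hsuf : (a :: t) <:+ (s ++ a :: t) := ⟨s, rfl⟩
  refine rtg_of_chain' (hc.suffix hsuf) rfl ?_
  rwa [List.getLast?_append_of_ne_nil _ (List.cons_ne_nil a t)] at hb

lemma rtg_head_mem {l : List V} (hc : l.Chain' E) {a b : V}
    (ha : l.head? = some a) (hb : b ∈ l) : ReflTransGen E a b := by
  obtain ⟨s, t, rfl⟩ := List.append_of_mem hb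
  have hpre : (s ++ [b]) <+: (s ++ b :: t) := ⟨t, by simp⟩
  refine rtg_of_chain' (hc.prefix hpre) ?_ (by simp)
  cases s with
  | nil => simpa using ha
  | cons x xs => simpa using ha

lemma cycle_rtg {C : List V} (hC : IsSimpleCycle E C) {a b : V}
    (ha : a ∈ C) (hb : b ∈ C) : ReflTransGen E a b := by
  obtain ⟨hlen, _, hch, hcyc⟩ := hC
  have hne : C ≠ [] := by rintro rfl; simp at hlen
  have h1 : ReflTransGen E a (C.getLast hne) :=
    rtg_mem_last hch ha (List.getLast?_eq_getLast_of_ne_nil hne)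
  have h2 : ReflTransGen E (C.head hne) b := by
    refine rtg_head_mem hch ?_ hb
    cases C with
    | nil => exact absurd rfl hne
    | cons x xs => rfl
  exact h1.trans (ReflTransGen.head (hcyc hne) h2)

lemma exists_nodup_path {a b : V} (h : ReflTransGen E a b) :
    ∃ l : List V, (a :: l).Chain' E ∧ (a :: l).getLast? = some b ∧ (a :: l).Nodup := by
  induction h using ReflTransGen.head_induction_on with
  | refl => exact ⟨[], List.isChain_singleton b, rfl, List.nodup_singleton b⟩
  | head hac _ ih =>
    rename_i a c _
    obtain ⟨l, hch, hlast, hnd⟩ := ih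
    by_cases hmem : a ∈ c :: l
    · obtain ⟨s, t, hst⟩ := List.append_of_mem hmem
      have hsuf : (a :: t) <:+ (c :: l) := ⟨s, hst.symm⟩
      refine ⟨t, hch.suffix hsuf, ?_, hnd.sublist hsuf.sublist⟩
      rw [hst, List.getLast?_append_of_ne_nil _ (List.cons_ne_nil a t)] at hlast
      exact hlast
    · exact ⟨c :: l, List.isChain_cons_cons.2 ⟨hac, hch⟩,
        by rw [List.getLast?_cons_cons]; exact hlast, List.nodup_cons.2 ⟨hmem, hnd⟩⟩

lemma isCycleVertex_of_transGen (hs : SimpleOriented E) {t : V}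
    (h : TransGen E t t) : IsCycleVertex E t := by
  obtain ⟨y, hty, hyt⟩ := (Relation.TransGen.head'_iff).1 h
  obtain ⟨l, hch, hlast, hnd⟩ := exists_nodup_path hyt
  have hLne : (y :: l) ≠ [] := List.cons_ne_nil _ _
  have hgl : (y :: l).getLast hLne = t := by
    rw [List.getLast?_eq_getLast_of_ne_nil hLne] at hlast
    exact Option.some_injective _ hlast
  have hsplit : (y :: l).dropLast ++ [t] = y :: l := by
    conv_lhs => rw [← hgl]
    exact List.dropLast_append_getLast hLne
  have hcL : (t :: (y :: l).dropLast) ++ [t] = t :: y :: l := by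
    rw [List.cons_append, hsplit]
  have hchain : ((t :: (y :: l).dropLast) ++ [t]).Chain' E := by
    rw [hcL]; exact List.isChain_cons_cons.2 ⟨hty, hch⟩
  obtain ⟨hc1, -, hc3⟩ := List.isChain_append.1 hchain
  have hcne : (t :: (y :: l).dropLast) ≠ [] := List.cons_ne_nil _ _
  have hlastc : E ((t :: (y :: l).dropLast).getLast hcne) t :=
    hc3 _ (List.getLast?_eq_getLast_of_ne_nil hcne) t (by simp)
  have hnd' := hnd
  rw [← hsplit] at hnd'
  have htnd : t ∉ (y :: l).dropLast := fun hmem =>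
    (List.nodup_append.1 hnd').2.2 t hmem t (by simp) rfl
  have hndc : (t :: (y :: l).dropLast).Nodup :=
    List.nodup_cons.2 ⟨htnd, (List.nodup_append.1 hnd').1⟩
  have hlen : 3 ≤ (t :: (y :: l).dropLast).length := by
    rcases l with _ | ⟨z, l'⟩
    · exfalso
      have hyt' : y = t := by simpa using hlast
      rw [hyt'] at hty
      exact hs t t hty hty
    · rcases l' with _ | ⟨z2, l''⟩
      · exfalso
        have hzt : z = t := by simpa using hlast
        have hyz : E y z := (List.isChain_cons_cons.1 hch).1
        rw [hzt] at hyz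
        exact hs t y hty hyz
      · simp [List.length_dropLast]
  exact ⟨_, ⟨hlen, hndc, hc1, fun h' => hlastc⟩, List.mem_cons_self⟩

lemma exists_first_split {t : V} : ∀ {w : List V}, t ∈ w → ∃ p q, w = p ++ t :: q ∧ t ∉ p := by
  intro w
  induction w with
  | nil => intro h; simp at h
  | cons a w' ih =>
    intro h
    by_cases hat : a = t
    · exact ⟨[], w', by simp [hat], by simp⟩
    · have htw' : t ∈ w' := by
        rcases List.mem_cons.1 h with h1 | h1
        · exact absurd h1.symm hat
        · exact h1
      obtain ⟨p, q, hpq, hnp⟩ := ih htw'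
      refine ⟨a :: p, q, by rw [List.cons_append, hpq], ?_⟩
      simp only [List.mem_cons, not_or]
      exact ⟨fun h' => hat h'.symm, hnp⟩

lemma exists_last_split {t : V} {w : List V} (h : t ∈ w) :
    ∃ p q, w = p ++ t :: q ∧ t ∉ q := by
  have hrev : t ∈ w.reverse := List.mem_reverse.2 h
  obtain ⟨p, q, hpq, hnp⟩ := exists_first_split hrev
  refine ⟨q.reverse, p.reverse, ?_, by simpa using hnp⟩
  have := congrArg List.reverse hpq
  simpa using this

lemma in_out_of_reduced {lt : V → V → Prop} {w : List V}
    (hred : Reduced E lt (w ++ w)) {t : V} (ht : t ∈ w) :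
    (∃ x ∈ w, E x t) ∧ (∃ y ∈ w, E t y) := by
  obtain ⟨p', q', hw1, hfp⟩ := exists_first_split ht
  obtain ⟨p, q, hw2, hlq⟩ := exists_last_split ht
  have hdec : w ++ w = p ++ [t] ++ (q ++ p') ++ [t] ++ q' := by
    nth_rewrite 1 [hw2]
    rw [hw1]
    simp
  have hu : t ∉ q ++ p' := by
    simp only [List.mem_append]
    rintro (h | h)
    exacts [hlq h, hfp h]
  have hmemw : ∀ x ∈ q ++ p', x ∈ w := by
    intro x hx
    rcases List.mem_append.1 hx with h | h
    · rw [hw2]; simp [h]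
    · rw [hw1]; simp [h]
  obtain ⟨h1, h2, -⟩ := hred
  constructor
  · by_contra hno
    push_neg at hno
    exact h1 ⟨p, q ++ p', q', t, hdec, hu, fun x hx => hno x (hmemw x hx)⟩
  · by_contra hno
    push_neg at hno
    exact h2 ⟨p, q ++ p', q', t, hdec, hu, fun y hy => hno y (hmemw y hy)⟩

lemma reach_periodic [Finite V] {w : List V}
    (hstep : ∀ x ∈ w, ∃ y ∈ w, E x y) {t : V} (ht : t ∈ w) :
    ∃ c, ReflTransGen E t c ∧ TransGen E c c := by
  classical
  have hex : ∀ x : {x : V // x ∈ w}, ∃ y : {x : V // x ∈ w}, E x.1 y.1 := by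
    intro x
    obtain ⟨y, hy, h⟩ := hstep x.1 x.2
    exact ⟨⟨y, hy⟩, h⟩
  choose f hf using hex
  have hiter : ∀ (n : ℕ) (x : {x : V // x ∈ w}), ReflTransGen E x.1 (f^[n] x).1 := by
    intro n
    induction n with
    | zero => intro x; exact ReflTransGen.refl
    | succ n ih =>
      intro x
      rw [Function.iterate_succ_apply']
      exact (ih x).trans (ReflTransGen.single (hf _))
  obtain ⟨i, j, hne, heq⟩ := Finite.exists_ne_map_eq_of_infinite (fun n : ℕ => f^[n] ⟨t, ht⟩)
  have key : ∀ i j : ℕ, i < j → f^[i] ⟨t, ht⟩ = f^[j] ⟨t, ht⟩ →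
      ∃ c, ReflTransGen E t c ∧ TransGen E c c := by
    intro i j hij he
    refine ⟨(f^[i] ⟨t, ht⟩).1, hiter i ⟨t, ht⟩, ?_⟩
    obtain ⟨d, rfl⟩ : ∃ d, j = (d + 1) + i := ⟨j - i - 1, by omega⟩
    set x := f^[i] (⟨t, ht⟩ : {x : V // x ∈ w}) with hx
    have hback : f^[d] (f x) = x := by
      rw [← Function.iterate_succ_apply, hx, ← Function.iterate_add_apply]
      exact he.symm
    have hrt : ReflTransGen E (f x).1 (f^[d] (f x)).1 := hiter d (f x)
    rw [hback] at hrt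
    exact TransGen.head' (hf x) hrt
  rcases lt_trichotomy i j with h | h | h
  · exact key i j h heq
  · exact absurd h hne
  · exact key j i h heq.symm

end Aux

/-- If `Θ` has no two distinct simple cycles connected by an oriented path and
`w ≠ 1` is a word such that `w^m` is reduced for every `m ≥ 1`, then every letter of `w` is a
cycle vertex. -/
theorem power_reduced_word_support_cyclic
    {V : Type*} [Fintype V] [LinearOrder V] (E : V → V → Prop)
    (hsimple : SimpleOriented E)
    (hnc : ¬ TwoCyclesConnected E)
    (w : List V) (hw : w ≠ [])
    (hred : ∀ m : ℕ, 1 ≤ m → Reduced E (· < ·) (wpow w m)) :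
    ∀ x ∈ w, IsCycleVertex E x := by
  intro t ht
  have hred2 := hred 2 (by norm_num)
  have hw2 : wpow w 2 = w ++ w := by simp [wpow]
  rw [hw2] at hred2
  have hBout : ∀ x ∈ w, ∃ y ∈ w, E x y := fun x hx => (in_out_of_reduced hred2 hx).2
  have hBin : ∀ x ∈ w, ∃ y ∈ w, E y x := by
    intro x hx
    obtain ⟨y, hy, h⟩ := (in_out_of_reduced hred2 hx).1
    exact ⟨y, hy, h⟩
  obtain ⟨c, htc, hcc⟩ := reach_periodic hBout ht
  obtain ⟨c', htc', hcc'⟩ := reach_periodic (E := Function.swap E) hBin ht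
  have hc't : ReflTransGen E c' t := Relation.reflTransGen_swap.1 htc'
  have hcc'2 : TransGen E c' c' := Relation.transGen_swap.1 hcc'
  obtain ⟨C, hC, hcC⟩ := isCycleVertex_of_transGen hsimple hcc
  obtain ⟨C', hC', hc'C'⟩ := isCycleVertex_of_transGen hsimple hcc'2
  have hrot : C'.IsRotated C := by
    by_contra hnr
    exact hnc ⟨C', C, hC', hC, hnr, c', hc'C', c, hcC, hc't.trans htc⟩
  have hc'C : c' ∈ C := hrot.mem_iff.1 hc'C'
  have hccp : ReflTransGen E c c' := cycle_rtg ⟨hC.1, hC.2.1, hC.2.2.1, hC.2.2.2⟩ hcC hc'C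
  have htt : TransGen E t t := (Relation.TransGen.trans_right htc hcc).trans_left (hccp.trans hc't)
  exact isCycleVertex_of_transGen hsimple htt
end

section
/- Let Θ be a finite simple oriented graph containing no two distinct simple cycles connected by an oriented path of length ≥ 0, with simple cycles C₁, …, C_k. Fix a linear order on V such that, writing C_l : x_{1,l} → ⋯ → x_{n_l,l} → x_{1,l}, for cycle vertices one has x_{p,r} < x_{q,s} if and only if r < s, or r = s and p < q. If w ∈ V* is a reduced word all of whose letters are cycle vertices, then w = w₁w₂⋯w_q for some words w₁, …, w_q ∈ V* and indices i₁ < i₂ < ⋯ < i_q such that supp(w_p) ⊆ V(C_{i_p}) for p = 1, …, q. -/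
open Relation

/-- Auxiliary: a word whose letters have non-decreasing `f`-values along the word
factors into blocks of constant `f`-value with strictly increasing values. -/
lemma aux_factor_blocks {V : Type*} {k : ℕ} (f : V → Fin k) :
    ∀ w : List V, w.Chain' (fun a b => f a ≤ f b) →
    ∃ L : List (List V × Fin k),
      (L.map Prod.snd).Chain' (· < ·) ∧
      w = (L.map Prod.fst).flatten ∧
      (∀ p ∈ L, ∀ x ∈ p.1, f x = p.2) ∧
      (∀ y, w.head? = some y → (L.map Prod.snd).head? = some (f y)) := by
  intro w
  induction w with
  | nil => exact fun _ => ⟨[], by simp [List.Chain'], by simp, by simp, by simp⟩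
  | cons x w ih =>
    intro hc
    obtain ⟨L, hmono, hflat, hmem, hhead⟩ := ih hc.tail
    cases w with
    | nil =>
      refine ⟨[([x], f x)], by simp [List.Chain'], by simp, ?_, by simp⟩
      rintro p hp x' hx'
      simp only [List.mem_singleton] at hp
      subst hp
      simp only [List.mem_singleton] at hx'
      subst hx'
      rfl
    | cons y w' =>
      have hxy : f x ≤ f y := (List.isChain_cons_cons.mp hc).1
      have hh := hhead y rfl
      cases L with
      | nil => simp at hh
      | cons bj L'' =>
        obtain ⟨b, j⟩ := bj
        simp only [List.map_cons, List.head?_cons, Option.some.injEq] at hh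
        rcases lt_or_eq_of_le hxy with hlt | heq
        · refine ⟨([x], f x) :: (b, j) :: L'', ?_, ?_, ?_, ?_⟩
          · exact List.isChain_cons_cons.mpr ⟨hh ▸ hlt, hmono⟩
          · simpa using hflat
          · rintro p hp x' hx'
            rcases List.mem_cons.mp hp with hp | hp
            · subst hp
              simp only [List.mem_singleton] at hx'
              subst hx'
              rfl
            · exact hmem p hp x' hx'
          · simp
        · refine ⟨(x :: b, j) :: L'', ?_, ?_, ?_, ?_⟩
          · simpa using hmono
          · simpa using hflat
          · rintro p hp x' hx'
            rcases List.mem_cons.mp hp with hp | hp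
            · subst hp
              rcases List.mem_cons.mp hx' with hx' | hx'
              · subst hx'; rw [heq, hh]
              · exact hmem (b, j) List.mem_cons_self x' hx'
            · exact hmem p (List.mem_cons_of_mem _ hp) x' hx'
          · intro z hz
            simp only [List.head?_cons, Option.some.injEq] at hz
            subst hz
            simp [hh, heq]

/-- With an order on `V` compatible with the enumeration of the cycles, every
reduced word all of whose letters are cycle vertices factors as `w = w₁ ⋯ w_q` with
`supp(w_p) ⊆ V(C_{i_p})` for strictly increasing indices `i₁ < ⋯ < i_q`. -/
theorem reduced_cyclic_word_factors_by_cycles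
    {V : Type*} [Fintype V] [LinearOrder V] (E : V → V → Prop)
    (hsimple : SimpleOriented E)
    (hnc : ¬ TwoCyclesConnected E)
    {k : ℕ} (cycles : Fin k → List V)
    (hcyc : ∀ j, IsSimpleCycle E (cycles j))
    (hdist : ∀ i j, i ≠ j → ¬ (cycles i).IsRotated (cycles j))
    (hcomp : ∀ c, IsSimpleCycle E c → ∃ j, c.IsRotated (cycles j))
    (horder : ∀ (r s : Fin k) (p : Fin (cycles r).length) (q : Fin (cycles s).length),
      (cycles r).get p < (cycles s).get q ↔ (r < s ∨ (r = s ∧ (p : ℕ) < (q : ℕ))))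
    (w : List V) (hred : Reduced E (· < ·) w)
    (hcw : ∀ x ∈ w, IsCycleVertex E x) :
    ∃ (q : ℕ) (ws : Fin q → List V) (idx : Fin q → Fin k),
      StrictMono idx ∧ w = (List.ofFn ws).flatten ∧
      ∀ p : Fin q, ∀ x ∈ ws p, x ∈ cycles (idx p) := by
  classical
  rcases eq_or_ne w [] with rfl | hw
  · exact ⟨0, fun _ => [], fun p => p.elim0, by intro a; exact a.elim0, by simp,
      fun p => p.elim0⟩
  obtain ⟨x₀, hx₀⟩ := List.exists_mem_of_ne_nil w hw
  obtain ⟨c₀, hc₀, _⟩ := hcw x₀ hx₀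
  obtain ⟨j₀, _⟩ := hcomp c₀ hc₀
  haveI : Nonempty (Fin k) := ⟨j₀⟩
  have hex : ∀ x ∈ w, ∃ j, x ∈ cycles j := by
    intro x hx
    obtain ⟨c, hc, hxc⟩ := hcw x hx
    obtain ⟨j, hrot⟩ := hcomp c hc
    exact ⟨j, hrot.mem_iff.mp hxc⟩
  set f : V → Fin k := fun x =>
    if h : ∃ j, x ∈ cycles j then h.choose else Classical.arbitrary _ with hfdef
  have hfmem : ∀ x ∈ w, x ∈ cycles (f x) := by
    intro x hx
    have h := hex x hx
    simp only [hfdef, dif_pos h]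
    exact h.choose_spec
  have hnoE : ∀ (x y : V) (i j : Fin k), i ≠ j → x ∈ cycles i → y ∈ cycles j →
      ¬ E x y := by
    intro x y i j hne hx hy hE
    exact hnc ⟨cycles i, cycles j, hcyc i, hcyc j, hdist i j hne, x, hx, y, hy,
      Relation.ReflTransGen.single hE⟩
  have hltv : ∀ (x y : V) (i j : Fin k), x ∈ cycles i → y ∈ cycles j → j < i →
      y < x := by
    intro x y i j hx hy hji
    obtain ⟨p, hp⟩ := List.get_of_mem hx
    obtain ⟨q, hq⟩ := List.get_of_mem hy
    rw [← hp, ← hq]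
    exact (horder j i q p).mpr (Or.inl hji)
  have hchain : w.Chain' (fun a b => f a ≤ f b) := by
    unfold List.Chain'
    rw [List.isChain_iff_getElem]
    intro i hi
    by_contra hle
    push_neg at hle
    have hi1 : i + 1 < w.length := by omega
    have hi0 : i < w.length := by omega
    set x := w.get ⟨i, hi0⟩ with hx
    set y := w.get ⟨i + 1, hi1⟩ with hy
    have hxw : x ∈ w := List.get_mem _ _
    have hyw : y ∈ w := List.get_mem _ _
    have hfx := hfmem x hxw
    have hfy := hfmem y hyw
    have hne : f y ≠ f x := ne_of_lt hle
    have hxyne : y ≠ x := by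
      intro h
      exact hne (by rw [h])
    have hyx : y < x := hltv x y (f x) (f y) hfx hfy hle
    have hdec : w = w.take i ++ [x] ++ [] ++ [y] ++ w.drop (i + 2) := by
      have h1 : w.drop i = x :: w.drop (i + 1) := by
        rw [List.drop_eq_getElem_cons hi0]
        rfl
      have h2 : w.drop (i + 1) = y :: w.drop (i + 2) := by
        rw [List.drop_eq_getElem_cons hi1]
        rfl
      conv_lhs => rw [← List.take_append_drop i w, h1, h2]
      simp
    refine hred.2.2 ⟨w.take i, [], w.drop (i + 2), x, y, hdec, hyx, ?_, ?_⟩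
    · constructor
      · simpa using hxyne
      · intro z hz
        simp only [List.mem_append, List.mem_singleton, List.not_mem_nil,
          or_false] at hz
        subst hz
        exact hnoE x y (f x) (f y) hne.symm hfx hfy
    · constructor
      · simpa using hxyne
      · intro z hz
        simp only [List.mem_append, List.mem_singleton, List.not_mem_nil,
          or_false] at hz
        subst hz
        exact hnoE y x (f y) (f x) hne hfy hfx
  obtain ⟨L, hmono, hflat, hmemL, -⟩ := aux_factor_blocks f w hchain
  refine ⟨L.length, fun p => (L.get p).1, fun p => (L.get p).2, ?_, ?_, ?_⟩
  · have hpw := List.isChain_iff_pairwise.mp hmono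
    rw [List.pairwise_iff_get] at hpw
    intro a b hab
    have hla : (a : ℕ) < (L.map Prod.snd).length := by simpa using a.isLt
    have hlb : (b : ℕ) < (L.map Prod.snd).length := by simpa using b.isLt
    have := hpw ⟨a, hla⟩ ⟨b, hlb⟩ hab
    simpa [List.getElem_map] using this
  · rw [hflat]
    congr 1
    conv_lhs => rw [← List.ofFn_get L]
    rw [List.map_ofFn]
    rfl
  · intro p x hx
    have hgm : L.get p ∈ L := List.get_mem _ _
    have hval := hmemL (L.get p) hgm x hx
    have hxw : x ∈ w := by
      rw [hflat]
      exact List.mem_flatten.mpr ⟨(L.get p).1, List.mem_map_of_mem hgm, hx⟩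
    have := hfmem x hxw
    rwa [hval] at this
end
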